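/- arXiv:1806.08590 — 5 statements merged into one kernel-verified Lean document; each statement's English description precedes it below -/
import Mathlib

section
/- Let Γ ≤ Δ be countable discrete groups. For every measure-preserving action a ∈ A(Γ,X,μ), the type of the co-induced action equals the co-induced IRS of the type: type(CIND_Γ^Δ(a)) = CIND_Γ^Δ(type(a)). In particular, if a, b ∈ A(Γ,X,μ) satisfy type(a) = type(b), then type(CIND_Γ^Δ(a)) = type(CIND_Γ^Δ(b)). -/
open MeasureTheory

namespace IRSPaper


/-! ## Basic setup: the space of subgroups, invariant random subgroups -/

/-- The conjugation action of a group on its space of subgroups: `g • H = gHg⁻¹`. -/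
def conjSub {G : Type*} [Group G] (g : G) (H : Subgroup G) : Subgroup G :=
  Subgroup.map ((MulAut.conj g).toMonoidHom) H

/-- The topology on the space of subgroups of `G`, induced from the product topology
on `G → Bool` (i.e. the topology of `2^G`). -/
noncomputable instance instTopSub (G : Type*) [Group G] : TopologicalSpace (Subgroup G) :=
  TopologicalSpace.induced
    (fun (H : Subgroup G) (g : G) => @decide (g ∈ H) (Classical.dec _)) inferInstance

/-- The Borel σ-algebra on the space of subgroups. -/
noncomputable instance instMeasSub (G : Type*) [Group G] : MeasurableSpace (Subgroup G) :=
  borel _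

instance instBorelSub (G : Type*) [Group G] : BorelSpace (Subgroup G) := ⟨rfl⟩

/-- An invariant random subgroup: a Borel probability measure on `Sub(G)` which is invariant
under the conjugation action of `G`. -/
def IsIRS {G : Type*} [Group G] (θ : Measure (Subgroup G)) : Prop :=
  IsProbabilityMeasure θ ∧ ∀ g : G, Measure.map (conjSub g) θ = θ

/-- The basic set `N_F = {H ∈ Sub(G) : F ⊆ H}`. -/
def NSet {G : Type*} [Group G] (F : Set G) : Set (Subgroup G) :=
  {H : Subgroup G | F ⊆ (H : Set G)}

/-- For `Γ ≤ Δ` and `S ⊆ Δ`, the set of subgroups of `Γ` containing every element of `Γ`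
whose image in `Δ` lies in `S`.  When `S = t⁻¹Ft ⊆ Γ`, this is exactly the basic set
`N_{t⁻¹Ft}^Γ ⊆ Sub(Γ)`. -/
def NpullSet {Δ : Type*} [Group Δ] (Γ : Subgroup Δ) (S : Set Δ) : Set (Subgroup ↥Γ) :=
  {Λ : Subgroup ↥Γ | ∀ x : ↥Γ, (x : Δ) ∈ S → x ∈ Λ}

/-- `T` is a transversal for the left cosets `Δ/Γ`: each left coset `dΓ` contains exactly
one element of `T`. -/
def IsLeftTransversal {Δ : Type*} [Group Δ] (Γ : Subgroup Δ) (T : Set Δ) : Prop :=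
  ∀ d : Δ, ∃! t : Δ, t ∈ T ∧ d⁻¹ * t ∈ Γ

/-- The defining property of the co-induced invariant random subgroup
`ν = CIND_Γ^Δ(θ)` (with respect to the transversal `T`):  for every finite `F ⊆ Δ`,
`ν(N_F) = 0` if `F ⊄ core_Δ(Γ)` and `ν(N_F) = ∏_{t ∈ T} θ(N_{t⁻¹Ft}^Γ)` if `F ⊆ core_Δ(Γ)`. -/
def CindSpec {Δ : Type*} [Group Δ] (Γ : Subgroup Δ) (T : Set Δ)
    (θ : Measure (Subgroup ↥Γ)) (ν : Measure (Subgroup Δ)) : Prop :=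
  ∀ F : Finset Δ,
    (¬ (F : Set Δ) ⊆ (Γ.normalCore : Set Δ) → ν (NSet (F : Set Δ)) = 0) ∧
    ((F : Set Δ) ⊆ (Γ.normalCore : Set Δ) →
      ν (NSet (F : Set Δ)) =
        ∏' t : T, θ (NpullSet Γ ((fun d => (t : Δ)⁻¹ * d * (t : Δ)) '' (F : Set Δ))))

/-- Ergodicity of a (not necessarily probability-) measure-preserving action given by
an explicit family of maps: every invariant measurable set is null or conull. -/
def ErgodicAct {G α : Type*} [MeasurableSpace α] (act : G → α → α) (μ : Measure α) : Prop :=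
  ∀ s : Set α, MeasurableSet s → (∀ g : G, act g ⁻¹' s = s) → μ s = 0 ∨ μ sᶜ = 0

/-- Weak mixing of an action: the diagonal action on the square is ergodic. -/
def WeaklyMixingAct {G α : Type*} [MeasurableSpace α] (act : G → α → α) (μ : Measure α) : Prop :=
  ErgodicAct (fun (g : G) (p : α × α) => (act g p.1, act g p.2)) (μ.prod μ)

/-- A measure is non-atomic (has no atoms) if every singleton is null. -/
def NonAtomicMeasure {α : Type*} [MeasurableSpace α] (μ : Measure α) : Prop :=
  ∀ x : α, μ {x} = 0

/-- The kernel of an IRS `θ` of `Γ`: the set of `γ ∈ Γ` with `θ(N_γ) = 1`.  (For a probability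
measure this set is a subgroup; taking `Subgroup.closure` makes it a `Subgroup` on the nose.) -/
def kerIRS {Δ : Type*} [Group Δ] (Γ : Subgroup Δ) (θ : Measure (Subgroup ↥Γ)) : Subgroup ↥Γ :=
  Subgroup.closure {x : ↥Γ | θ {Λ : Subgroup ↥Γ | x ∈ Λ} = 1}

/-- `core_Δ(ker(θ))`, viewed as a subgroup of `Δ`. -/
def coreKer {Δ : Type*} [Group Δ] (Γ : Subgroup Δ) (θ : Measure (Subgroup ↥Γ)) : Subgroup Δ :=
  ((kerIRS Γ θ).map Γ.subtype).normalCore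

/-! ## Measure-preserving actions, stabilizer type, product measures -/

/-- `a` is a measure-preserving (Borel) action of `G` on `(X,μ)`. -/
def IsMPAction {G X : Type*} [Group G] [MeasurableSpace X] (a : G → X → X)
    (μ : Measure X) : Prop :=
  (∀ g : G, Measurable (a g)) ∧ (∀ g : G, Measure.map (a g) μ = μ) ∧
    a 1 = id ∧ ∀ g h : G, a (g * h) = a g ∘ a h

/-- The stabilizer of a point, as a subgroup (for an action, `{g | a g x = x}` is a
subgroup, so taking `Subgroup.closure` of it does not change it). -/
def stabSub {G X : Type*} [Group G] (a : G → X → X) (x : X) : Subgroup G :=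
  Subgroup.closure {g : G | a g x = x}

/-- The type of an action: the distribution of the stabilizer of a `μ`-random point. -/
noncomputable def typeM {G X : Type*} [Group G] [MeasurableSpace X]
    (a : G → X → X) (μ : Measure X) : Measure (Subgroup G) :=
  Measure.map (fun x => stabSub a x) μ

/-- `ν` is the product measure `μ^ι` on `ι → X`: a probability measure whose finite-dimensional
cylinder sets have the product measure (this characterizes `μ^ι` uniquely). -/
def IsProdMeasure {ι X : Type*} [MeasurableSpace X] (μ : Measure X)
    (ν : Measure (ι → X)) : Prop :=
  IsProbabilityMeasure ν ∧
    ∀ (s : Finset ι) (f : ι → Set X), (∀ i, MeasurableSet (f i)) →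
      ν {x : ι → X | ∀ i ∈ s, x i ∈ f i} = ∏ i ∈ s, μ (f i)

/-! ## Auxiliary lemmas: the measurable structure of `Sub(G)` -/

section Meas
variable {G : Type*} [Group G] [Countable G]

lemma measSub_eq : (instMeasSub G) =
    MeasurableSpace.generateFrom (Set.range (fun g : G => {H : Subgroup G | g ∈ H})) := by
  have h1 : (instMeasSub G) = MeasurableSpace.comap
      (fun (H : Subgroup G) (g : G) => @decide (g ∈ H) (Classical.dec _)) (borel (G → Bool)) :=
    borel_comap
  have h2 : borel (G → Bool) = MeasurableSpace.pi := (Pi.borelSpace.measurable_eq).symm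
  rw [h1, h2, MeasurableSpace.pi_eq_generateFrom_projections, MeasurableSpace.comap_generateFrom]
  apply le_antisymm
  · apply MeasurableSpace.generateFrom_le
    rintro _ ⟨_, ⟨g, A, hA, rfl⟩, rfl⟩
    have hpre : ((fun (H : Subgroup G) (g : G) => @decide (g ∈ H) (Classical.dec _)) ⁻¹'
        (Function.eval g ⁻¹' A)) = {H : Subgroup G | @decide (g ∈ H) (Classical.dec _) ∈ A} := rfl
    rw [hpre]
    have hgen : MeasurableSet[MeasurableSpace.generateFrom
        (Set.range (fun g : G => {H : Subgroup G | g ∈ H}))] {H : Subgroup G | g ∈ H} :=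
      MeasurableSpace.measurableSet_generateFrom ⟨g, rfl⟩
    by_cases ht : true ∈ A <;> by_cases hf : false ∈ A
    · have : {H : Subgroup G | @decide (g ∈ H) (Classical.dec _) ∈ A} = Set.univ := by
        ext H; simp only [Set.mem_setOf_eq, Set.mem_univ, iff_true]
        rcases Bool.dichotomy (@decide (g ∈ H) (Classical.dec _)) with h | h <;> rw [h] <;> assumption
      rw [this]; exact @MeasurableSet.univ _ (MeasurableSpace.generateFrom _)
    · have : {H : Subgroup G | @decide (g ∈ H) (Classical.dec _) ∈ A} = {H : Subgroup G | g ∈ H} := by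
        ext H; simp only [Set.mem_setOf_eq]
        constructor
        · intro hm
          by_contra hgH
          rw [@decide_eq_false (g ∈ H) (Classical.dec _) hgH] at hm; exact hf hm
        · intro hm; rw [@decide_eq_true (g ∈ H) (Classical.dec _) hm]; exact ht
      rw [this]; exact hgen
    · have : {H : Subgroup G | @decide (g ∈ H) (Classical.dec _) ∈ A} = {H : Subgroup G | g ∈ H}ᶜ := by
        ext H; simp only [Set.mem_setOf_eq, Set.mem_compl_iff]
        constructor
        · intro hm hgH
          rw [@decide_eq_true (g ∈ H) (Classical.dec _) hgH] at hm; exact ht hm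
        · intro hm; rw [@decide_eq_false (g ∈ H) (Classical.dec _) hm]; exact hf
      rw [this]; exact hgen.compl
    · have : {H : Subgroup G | @decide (g ∈ H) (Classical.dec _) ∈ A} = ∅ := by
        ext H; simp only [Set.mem_setOf_eq, Set.mem_empty_iff_false, iff_false]
        intro hm
        rcases Bool.dichotomy (@decide (g ∈ H) (Classical.dec _)) with h | h <;> rw [h] at hm
        · exact hf hm
        · exact ht hm
      rw [this]; exact @MeasurableSet.empty _ (MeasurableSpace.generateFrom _)
  · apply MeasurableSpace.generateFrom_le
    rintro _ ⟨g, rfl⟩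
    apply MeasurableSpace.measurableSet_generateFrom
    refine ⟨Function.eval g ⁻¹' {true}, ⟨g, {true}, trivial, rfl⟩, ?_⟩
    ext H
    simp [Function.eval]

lemma measurableSet_memSub (g : G) : MeasurableSet {H : Subgroup G | g ∈ H} := by
  rw [measSub_eq]; exact MeasurableSpace.measurableSet_generateFrom ⟨g, rfl⟩

lemma measurableSet_NSet (F : Set G) (hF : F.Countable) : MeasurableSet (NSet F) := by
  have : NSet F = ⋂ g ∈ F, {H : Subgroup G | g ∈ H} := by
    ext H; simp [NSet, Set.subset_def]
  rw [this]
  exact MeasurableSet.biInter hF (fun g _ => measurableSet_memSub g)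

lemma measurable_toSub {α : Type*} [MeasurableSpace α] {f : α → Subgroup G}
    (h : ∀ g : G, MeasurableSet {x | g ∈ f x}) : Measurable f := by
  rw [measSub_eq]
  apply measurable_generateFrom
  rintro _ ⟨g, rfl⟩
  exact h g

omit [Countable G] in
lemma NSet_inter (F F' : Set G) : NSet F ∩ NSet F' = NSet (F ∪ F') := by
  ext H
  simp only [NSet, Set.mem_inter_iff, Set.mem_setOf_eq, Set.union_subset_iff]

lemma measSub_eq_boxes : (instMeasSub G) =
    MeasurableSpace.generateFrom (Set.range (fun F : Finset G => NSet (F : Set G))) := by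
  apply le_antisymm
  · rw [measSub_eq]
    apply MeasurableSpace.generateFrom_le
    rintro _ ⟨g, rfl⟩
    have : {H : Subgroup G | g ∈ H} = NSet (({g} : Finset G) : Set G) := by
      ext H; simp [NSet]
    show MeasurableSet[MeasurableSpace.generateFrom
      (Set.range (fun F : Finset G => NSet (F : Set G)))] {H : Subgroup G | g ∈ H}
    rw [this]
    exact MeasurableSpace.measurableSet_generateFrom ⟨{g}, rfl⟩
  · apply MeasurableSpace.generateFrom_le
    rintro _ ⟨F, rfl⟩
    exact measurableSet_NSet _ (F.countable_toSet)

lemma sub_measure_ext {μ ν : Measure (Subgroup G)} [IsProbabilityMeasure μ]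
    [IsProbabilityMeasure ν] (h : ∀ F : Finset G, μ (NSet (F : Set G)) = ν (NSet (F : Set G))) :
    μ = ν := by
  classical
  refine ext_of_generate_finite _ measSub_eq_boxes ?_ ?_ ?_
  · rintro _ ⟨F, rfl⟩ _ ⟨F', rfl⟩ _
    show NSet (F : Set G) ∩ NSet (F' : Set G) ∈ _
    rw [NSet_inter]
    exact ⟨F ∪ F', by simp [Finset.coe_union]⟩
  · rintro _ ⟨F, rfl⟩; exact h F
  · simp [measure_univ]

omit [Countable G] in
lemma conjSub_mem (d x : G) (H : Subgroup G) : x ∈ conjSub d H ↔ d⁻¹ * x * d ∈ H := by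
  simp only [conjSub, Subgroup.mem_map]
  constructor
  · rintro ⟨y, hy, rfl⟩
    simpa [mul_assoc] using hy
  · intro hx
    exact ⟨d⁻¹ * x * d, hx, by simp [MulAut.conj]; group⟩

lemma measurable_conjSub (d : G) : Measurable (conjSub d : Subgroup G → Subgroup G) := by
  apply measurable_toSub
  intro g
  have : {H : Subgroup G | g ∈ conjSub d H} = {H : Subgroup G | d⁻¹ * g * d ∈ H} := by
    ext H; simp [conjSub_mem]
  rw [this]
  exact measurableSet_memSub _

end Meas

/-! ## Stabilizers -/

section Stab
variable {G X : Type*} [Group G]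

lemma mem_stabSub {a : G → X → X} (h1 : a 1 = id) (hm : ∀ g h : G, a (g * h) = a g ∘ a h)
    {x : X} {g : G} : g ∈ stabSub a x ↔ a g x = x := by
  have inv_mem : ∀ g : G, a g x = x → a g⁻¹ x = x := by
    intro g hg
    calc a g⁻¹ x = a g⁻¹ (a g x) := by rw [hg]
    _ = a (g⁻¹ * g) x := by rw [hm]; rfl
    _ = x := by rw [inv_mul_cancel, h1]; rfl
  let S : Subgroup G :=
    { carrier := {g : G | a g x = x}
      one_mem' := by simp [h1]
      mul_mem' := by
        intro p q hp hq
        simp only [Set.mem_setOf_eq] at *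
        rw [hm]; simp [Function.comp, hp, hq]
      inv_mem' := by
        intro p hp
        exact inv_mem p hp }
  have : stabSub a x = S := by
    rw [stabSub]
    exact Subgroup.closure_eq S ▸ rfl
  rw [this]
  rfl

end Stab

/-! ## Product measures -/

section Prod
variable {ι X : Type*} [Countable ι] [MeasurableSpace X] {μ : Measure X} {ν : Measure (ι → X)}

/-- finite measurable cylinders -/
def Cyl (ι X : Type*) [MeasurableSpace X] : Set (Set (ι → X)) :=
  {S | ∃ (s : Finset ι) (f : ι → Set X), (∀ i, MeasurableSet (f i)) ∧
    S = {x : ι → X | ∀ i ∈ s, x i ∈ f i}}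

omit [Countable ι] in
lemma measurableSet_cyl {f : ι → Set X} (hf : ∀ i, MeasurableSet (f i)) (s : Finset ι) :
    MeasurableSet {x : ι → X | ∀ i ∈ s, x i ∈ f i} := by
  have : {x : ι → X | ∀ i ∈ s, x i ∈ f i} = ⋂ i ∈ s, (fun x : ι → X => x i) ⁻¹' f i := by
    ext x; simp
  rw [this]
  exact MeasurableSet.biInter s.countable_toSet
    (fun i _ => (measurable_pi_apply i) (hf i))

omit [Countable ι] in
lemma pi_eq_generateFrom_cyl :
    (MeasurableSpace.pi : MeasurableSpace (ι → X)) = MeasurableSpace.generateFrom (Cyl ι X) := by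
  classical
  apply le_antisymm
  · rw [MeasurableSpace.pi]
    apply iSup_le
    intro i
    intro S hS
    obtain ⟨A, hA, rfl⟩ := hS
    apply MeasurableSpace.measurableSet_generateFrom
    refine ⟨{i}, fun j => if j = i then A else Set.univ, ?_, ?_⟩
    · intro j; by_cases h : j = i <;> simp [h, hA]
    · ext x; simp
  · apply MeasurableSpace.generateFrom_le
    rintro _ ⟨s, f, hf, rfl⟩
    exact measurableSet_cyl hf s

omit [Countable ι] in
lemma isPiSystem_cyl : IsPiSystem (Cyl ι X) := by
  classical
  rintro _ ⟨s, f, hf, rfl⟩ _ ⟨t, g, hg, rfl⟩ _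
  refine ⟨s ∪ t, fun i => (if i ∈ s then f i else Set.univ) ∩ (if i ∈ t then g i else Set.univ),
    ?_, ?_⟩
  · intro i
    apply MeasurableSet.inter <;> [skip; skip] <;> first
      | (by_cases h : i ∈ s <;> simp [h, hf])
      | (by_cases h : i ∈ t <;> simp [h, hg])
  · ext x
    simp only [Set.mem_inter_iff, Set.mem_setOf_eq, Finset.mem_union]
    constructor
    · rintro ⟨h1, h2⟩ i hi
      constructor
      · by_cases h : i ∈ s <;> simp [h, h1 i]
      · by_cases h : i ∈ t <;> simp [h, h2 i]
    · intro h
      constructor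
      · intro i hi
        have := (h i (Or.inl hi)).1
        simpa [hi] using this
      · intro i hi
        have := (h i (Or.inr hi)).2
        simpa [hi] using this

/-- box formula -/
lemma prodMeasure_box (hν : IsProdMeasure μ ν) {f : ι → Set X}
    (hf : ∀ i, MeasurableSet (f i)) :
    ν {x : ι → X | ∀ i, x i ∈ f i} = ⨅ s : Finset ι, ∏ i ∈ s, μ (f i) := by
  classical
  have hbig : {x : ι → X | ∀ i, x i ∈ f i} =
      ⋂ s : Finset ι, {x : ι → X | ∀ i ∈ s, x i ∈ f i} := by
    ext x
    simp only [Set.mem_setOf_eq, Set.mem_iInter]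
    exact ⟨fun h s i _ => h i, fun h i => h {i} i (Finset.mem_singleton_self i)⟩
  have := hν.1
  rw [hbig]
  rw [Directed.measure_iInter (fun s => (measurableSet_cyl hf s).nullMeasurableSet) ?_ ?_]
  · exact iInf_congr (fun s => hν.2 s f hf)
  · intro s t
    refine ⟨s ∪ t, ?_, ?_⟩ <;> intro x hx <;> simp only [Set.mem_setOf_eq] at * <;>
      intro i hi <;> exact hx i (by simp [hi])
  · exact ⟨∅, by simp [measure_ne_top]⟩

omit [Countable ι] in
lemma prodMeasure_unique (hν : IsProdMeasure μ ν) {ν' : Measure (ι → X)}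
    (hν' : IsProdMeasure μ ν') : ν = ν' := by
  have h1 := hν.1
  have h2 := hν'.1
  refine ext_of_generate_finite _ pi_eq_generateFrom_cyl isPiSystem_cyl ?_ ?_
  · rintro _ ⟨s, f, hf, rfl⟩
    rw [hν.2 s f hf, hν'.2 s f hf]
  · simp [measure_univ]

omit [Countable ι] [MeasurableSpace X] in
/-- tprod over a countable index with factors `≤ 1` equals the inf of partial products -/
lemma tprod_eq_iInf {c : ι → ENNReal} (hc : ∀ i, c i ≤ 1) :
    (∏' i, c i) = ⨅ s : Finset ι, ∏ i ∈ s, c i := by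
  classical
  have hanti : Antitone (fun s : Finset ι => ∏ i ∈ s, c i) := by
    intro s t hst
    calc ∏ i ∈ t, c i = (∏ i ∈ s, c i) * ∏ i ∈ t \ s, c i := by
          rw [← Finset.prod_sdiff hst, mul_comm]
    _ ≤ (∏ i ∈ s, c i) * 1 := by
          gcongr
          exact Finset.prod_le_one (fun i _ => zero_le) (fun i _ => hc i)
    _ = ∏ i ∈ s, c i := mul_one _
  have : HasProd c (⨅ s : Finset ι, ∏ i ∈ s, c i) := tendsto_atTop_iInf hanti
  exact this.tprod_eq

omit [Countable ι] in
lemma prodMeasure_map (hν : IsProdMeasure μ ν) (e : ι ≃ ι) {g : ι → X → X}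
    (hgm : ∀ i, Measurable (g i)) (hgp : ∀ i, Measure.map (g i) μ = μ) :
    IsProdMeasure μ (Measure.map (fun x i => g i (x (e i))) ν) := by
  classical
  have hΦ : Measurable (fun (x : ι → X) (i : ι) => g i (x (e i))) :=
    measurable_pi_lambda _ (fun i => (hgm i).comp (measurable_pi_apply (e i)))
  have hP := hν.1
  refine ⟨Measure.isProbabilityMeasure_map hΦ.aemeasurable, ?_⟩
  intro s f hf
  rw [Measure.map_apply hΦ (measurableSet_cyl hf s)]
  have hpre : (fun (x : ι → X) (i : ι) => g i (x (e i))) ⁻¹' {x : ι → X | ∀ i ∈ s, x i ∈ f i}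
      = {x : ι → X | ∀ j ∈ s.image e, x j ∈ g (e.symm j) ⁻¹' f (e.symm j)} := by
    ext x
    simp only [Set.mem_preimage, Set.mem_setOf_eq, Finset.mem_image]
    constructor
    · rintro h j ⟨i, hi, rfl⟩
      simpa using h i hi
    · intro h i hi
      have := h (e i) ⟨i, hi, rfl⟩
      simpa using this
  rw [hpre, hν.2 _ _ (fun j => (hgm _) (hf _))]
  rw [Finset.prod_image (fun i _ j _ h => e.injective h)]
  apply Finset.prod_congr rfl
  intro i _
  rw [Equiv.symm_apply_apply]
  rw [← Measure.map_apply (hgm i) (hf i), hgp i]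

end Prod

/-! ## equality of functions on a standard Borel space -/

lemma measurableSet_eqFun {α X : Type*} [MeasurableSpace α] [MeasurableSpace X]
    [StandardBorelSpace X] {f g : α → X} (hf : Measurable f) (hg : Measurable g) :
    MeasurableSet {x | f x = g x} := by
  letI := upgradeStandardBorel X
  exact hf.stronglyMeasurable.measurableSet_eq_fun hg.stronglyMeasurable

/-! ## Cocycle identities -/

section Cocycle
variable {Δ : Type*} [Group Δ] {Γ : Subgroup Δ} {T : Set Δ}
  (hT : IsLeftTransversal Γ T) (σ : Δ → T → T) (ρ : Δ → T → ↥Γ)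
  (hσρ : ∀ (δ : Δ) (t : T), δ * (t : Δ) = (σ δ t : Δ) * ((ρ δ t : ↥Γ) : Δ))

include hT hσρ

lemma sigma_unique (δ : Δ) (t t' : T) (h : (δ * (t : Δ))⁻¹ * (t' : Δ) ∈ Γ) : t' = σ δ t := by
  obtain ⟨u, _, hu⟩ := hT (δ * (t : Δ))
  have h1 : (t' : Δ) = u := hu _ ⟨t'.2, h⟩
  have h2 : ((σ δ t : T) : Δ) = u := by
    refine hu _ ⟨(σ δ t).2, ?_⟩
    rw [hσρ δ t]
    simp [mul_assoc]
  exact Subtype.ext (h1.trans h2.symm)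

lemma sigma_one (t : T) : σ 1 t = t := by
  refine (sigma_unique hT σ ρ hσρ 1 t t ?_).symm
  simp [Subgroup.one_mem]

lemma rho_one (t : T) : ρ 1 t = 1 := by
  have h := hσρ 1 t
  rw [sigma_one hT σ ρ hσρ] at h
  have : ((ρ 1 t : ↥Γ) : Δ) = 1 := by
    have := h.symm
    rwa [one_mul, mul_eq_left] at this
  exact_mod_cast Subtype.ext this

lemma sigma_mul (δ η : Δ) (t : T) : σ (δ * η) t = σ δ (σ η t) := by
  refine (sigma_unique hT σ ρ hσρ (δ * η) t (σ δ (σ η t)) ?_).symm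
  have h1 := hσρ η t
  have h2 := hσρ δ (σ η t)
  have : δ * η * (t : Δ) = ((σ δ (σ η t) : T) : Δ) *
      (((ρ δ (σ η t) : ↥Γ) : Δ) * ((ρ η t : ↥Γ) : Δ)) := by
    rw [mul_assoc, h1, ← mul_assoc, h2, mul_assoc]
  rw [this]
  have heq : (((σ δ (σ η t) : T) : Δ) * (((ρ δ (σ η t) : ↥Γ) : Δ) * ((ρ η t : ↥Γ) : Δ)))⁻¹ *
      ((σ δ (σ η t) : T) : Δ) = (((ρ δ (σ η t) : ↥Γ) : Δ) * ((ρ η t : ↥Γ) : Δ))⁻¹ := by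
    group
  rw [heq]
  exact Subgroup.inv_mem _ (Subgroup.mul_mem _ (ρ δ (σ η t)).2 (ρ η t).2)

lemma rho_mul (δ η : Δ) (t : T) : ρ (δ * η) t = ρ δ (σ η t) * ρ η t := by
  have h := hσρ (δ * η) t
  rw [sigma_mul hT σ ρ hσρ] at h
  have h1 := hσρ η t
  have h2 := hσρ δ (σ η t)
  have key : ((σ δ (σ η t) : T) : Δ) * ((ρ (δ * η) t : ↥Γ) : Δ)
      = ((σ δ (σ η t) : T) : Δ) * (((ρ δ (σ η t) : ↥Γ) : Δ) * ((ρ η t : ↥Γ) : Δ)) := by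
    rw [← h, mul_assoc, h1, ← mul_assoc, h2, mul_assoc]
  have : ((ρ (δ * η) t : ↥Γ) : Δ) = ((ρ δ (σ η t) * ρ η t : ↥Γ) : Δ) := by
    have := mul_left_cancel key
    simpa using this
  exact_mod_cast Subtype.ext this

/-- membership in the normal core detected by `σ` -/
lemma mem_core_iff_sigma (δ : Δ) : δ ∈ Γ.normalCore ↔ ∀ t : T, σ δ t = t := by
  constructor
  · intro hδ t
    refine (sigma_unique hT σ ρ hσρ δ t t ?_).symm
    have h0 : (t : Δ)⁻¹ * δ⁻¹ * (t : Δ)⁻¹⁻¹ ∈ Γ :=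
      Subgroup.inv_mem Γ.normalCore hδ ((t : Δ)⁻¹)
    simpa [mul_assoc, mul_inv_rev] using h0
  · intro h
    intro d
    obtain ⟨u, ⟨huT, hu⟩, _⟩ := hT d⁻¹
    set t : T := ⟨u, huT⟩
    have ht : σ δ t = t := h t
    have hρ := hσρ δ t
    rw [ht] at hρ
    have h1 : (t : Δ)⁻¹ * δ * (t : Δ) ∈ Γ := by
      have : (t : Δ)⁻¹ * (δ * (t : Δ)) = ((ρ δ t : ↥Γ) : Δ) := by rw [hρ]; group
      rw [← mul_assoc] at this
      rw [this]; exact (ρ δ t).2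
    have hu' : d * u ∈ Γ := by simpa using hu
    have : d * δ * d⁻¹ = (d * u) * ((t : Δ)⁻¹ * δ * (t : Δ)) * (d * u)⁻¹ := by
      show d * δ * d⁻¹ = (d * u) * ((u : Δ)⁻¹ * δ * u) * (d * u)⁻¹
      group
    rw [this]
    exact Subgroup.mul_mem _ (Subgroup.mul_mem _ hu' h1) (Subgroup.inv_mem _ hu')

end Cocycle

section Main

variable {Δ : Type*} [Group Δ] [Countable Δ] {Γ : Subgroup Δ}
  {X : Type*} [MeasurableSpace X] [StandardBorelSpace X]
  {μ : Measure X} [IsProbabilityMeasure μ] [NullSingletonClass μ]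
  {T : Set Δ} (hT : IsLeftTransversal Γ T)
  (σ : Δ → T → T) (ρ : Δ → T → ↥Γ)
  (hσρ : ∀ (δ : Δ) (t : T), δ * (t : Δ) = (σ δ t : Δ) * ((ρ δ t : ↥Γ) : Δ))
  {ν : Measure (T → X)} (hν : IsProdMeasure μ ν)
  {a : ↥Γ → X → X} (ha : IsMPAction a μ)

/-- the co-induced action -/
def coact {Δ : Type*} [Group Δ] {Γ : Subgroup Δ} {T : Set Δ} {X : Type*}
    (σ : Δ → T → T) (ρ : Δ → T → ↥Γ) (a : ↥Γ → X → X) : Δ → (T → X) → (T → X) :=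
  fun δ f t => a (ρ δ⁻¹ t)⁻¹ (f (σ δ⁻¹ t))

lemma measurableSet_NpullSet (S : Set Δ) : MeasurableSet (NpullSet Γ S) := by
  have : NpullSet Γ S = ⋂ (x : ↥Γ) (_ : (x : Δ) ∈ S), {Λ : Subgroup ↥Γ | x ∈ Λ} := by
    ext Λ; simp [NpullSet]
  rw [this]
  exact MeasurableSet.iInter fun x => MeasurableSet.iInter fun _ => measurableSet_memSub x

include hT hσρ ha hν

omit hν in
lemma coact_one : coact σ ρ a 1 = id := by
  have h1 := ha.2.2.1
  funext f
  funext t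
  show a (ρ 1⁻¹ t)⁻¹ (f (σ 1⁻¹ t)) = f t
  rw [inv_one, rho_one hT σ ρ hσρ, sigma_one hT σ ρ hσρ, inv_one, h1]
  rfl

omit hν in
lemma coact_mul (δ η : Δ) : coact σ ρ a (δ * η) = coact σ ρ a δ ∘ coact σ ρ a η := by
  have hm := ha.2.2.2
  funext f
  funext t
  show a (ρ (δ * η)⁻¹ t)⁻¹ (f (σ (δ * η)⁻¹ t)) =
    a (ρ δ⁻¹ t)⁻¹ ((coact σ ρ a η f) (σ δ⁻¹ t))
  show a (ρ (δ * η)⁻¹ t)⁻¹ (f (σ (δ * η)⁻¹ t)) =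
    a (ρ δ⁻¹ t)⁻¹ (a (ρ η⁻¹ (σ δ⁻¹ t))⁻¹ (f (σ η⁻¹ (σ δ⁻¹ t))))
  rw [mul_inv_rev, sigma_mul hT σ ρ hσρ, rho_mul hT σ ρ hσρ]
  rw [mul_inv_rev, hm]
  rfl

omit hT hσρ hν in
lemma coact_measurable (δ : Δ) : Measurable (coact σ ρ a δ) :=
  measurable_pi_lambda _ (fun t => (ha.1 _).comp (measurable_pi_apply _))

lemma coact_map (δ : Δ) : Measure.map (coact σ ρ a δ) ν = ν := by
  let e : (T : Set Δ) ≃ T :=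
    { toFun := σ δ⁻¹
      invFun := σ δ
      left_inv := fun t => by
        rw [← sigma_mul hT σ ρ hσρ, mul_inv_cancel, sigma_one hT σ ρ hσρ]
      right_inv := fun t => by
        rw [← sigma_mul hT σ ρ hσρ, inv_mul_cancel, sigma_one hT σ ρ hσρ] }
  have key : IsProdMeasure μ
      (Measure.map (fun (x : T → X) (t : T) => a (ρ δ⁻¹ t)⁻¹ (x (e t))) ν) :=
    prodMeasure_map hν e (fun t => ha.1 _) (fun t => ha.2.1 _)
  have : (fun (x : T → X) (t : T) => a (ρ δ⁻¹ t)⁻¹ (x (e t))) = coact σ ρ a δ := rfl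
  rw [this] at key
  exact prodMeasure_unique key hν

lemma coact_isMP : IsMPAction (coact σ ρ a) ν :=
  ⟨fun δ => coact_measurable σ ρ ha δ, fun δ => coact_map hT σ ρ hσρ hν ha δ,
    coact_one hT σ ρ hσρ ha, fun δ η => coact_mul hT σ ρ hσρ ha δ η⟩

omit hν in
lemma mem_stab_coact {δ : Δ} {f : T → X} :
    δ ∈ stabSub (coact σ ρ a) f ↔ coact σ ρ a δ f = f :=
  mem_stabSub (coact_one hT σ ρ hσρ ha) (fun g h => coact_mul hT σ ρ hσρ ha g h)

omit hν in
lemma measurable_stab_coact : Measurable (fun f : T → X => stabSub (coact σ ρ a) f) := by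
  apply measurable_toSub
  intro δ
  have : {f : T → X | δ ∈ stabSub (coact σ ρ a) f} = ⋂ t : T,
      {f : T → X | coact σ ρ a δ f t = f t} := by
    ext f
    simp only [Set.mem_setOf_eq, Set.mem_iInter, mem_stab_coact hT σ ρ hσρ ha]
    exact ⟨fun h t => by rw [h], fun h => funext h⟩
  rw [this]
  refine MeasurableSet.iInter fun t => ?_
  exact measurableSet_eqFun ((ha.1 _).comp (measurable_pi_apply _)) (measurable_pi_apply t)

omit hT hσρ hν in
lemma measurable_stab_a : Measurable (fun x : X => stabSub a x) := by
  apply measurable_toSub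
  intro γ
  have : {x : X | γ ∈ stabSub a x} = {x : X | a γ x = x} := by
    ext x
    simp only [Set.mem_setOf_eq, mem_stabSub ha.2.2.1 ha.2.2.2]
  rw [this]
  exact measurableSet_eqFun (ha.1 γ) measurable_id

omit hν in
lemma stab_coact_conj (d : Δ) (f : T → X) :
    conjSub d (stabSub (coact σ ρ a) f) = stabSub (coact σ ρ a) (coact σ ρ a d f) := by
  have hmul := coact_mul hT σ ρ hσρ ha
  have hone := coact_one hT σ ρ hσρ ha
  ext g
  rw [conjSub_mem, mem_stab_coact hT σ ρ hσρ ha, mem_stab_coact hT σ ρ hσρ ha]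
  constructor
  · intro h
    have : coact σ ρ a d (coact σ ρ a (d⁻¹ * g * d) f) = coact σ ρ a d f := by rw [h]
    calc coact σ ρ a g (coact σ ρ a d f)
        = coact σ ρ a (g * d) f := by rw [hmul]; rfl
      _ = coact σ ρ a (d * (d⁻¹ * g * d)) f := by
          have hgd : g * d = d * (d⁻¹ * g * d) := by group
          rw [← hgd]
      _ = coact σ ρ a d (coact σ ρ a (d⁻¹ * g * d) f) := by rw [hmul]; rfl
      _ = coact σ ρ a d f := this
  · intro h
    have h2 : coact σ ρ a d⁻¹ (coact σ ρ a g (coact σ ρ a d f)) =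
        coact σ ρ a d⁻¹ (coact σ ρ a d f) := by rw [h]
    calc coact σ ρ a (d⁻¹ * g * d) f
        = coact σ ρ a d⁻¹ (coact σ ρ a g (coact σ ρ a d f)) := by
          have hgd : d⁻¹ * g * d = d⁻¹ * (g * d) := by group
          rw [hgd, hmul, hmul]
          rfl
      _ = coact σ ρ a d⁻¹ (coact σ ρ a d f) := h2
      _ = coact σ ρ a (d⁻¹ * d) f := by rw [hmul]; rfl
      _ = f := by rw [inv_mul_cancel, hone]; rfl

lemma isIRS_type_coact : IsIRS (typeM (coact σ ρ a) ν) := by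
  haveI := hν.1
  constructor
  · exact Measure.isProbabilityMeasure_map (measurable_stab_coact hT σ ρ hσρ ha).aemeasurable
  · intro d
    show Measure.map (conjSub d) (Measure.map _ ν) = _
    rw [Measure.map_map (measurable_conjSub d) (measurable_stab_coact hT σ ρ hσρ ha)]
    have : (conjSub d) ∘ (fun f : T → X => stabSub (coact σ ρ a) f) =
        (fun f : T → X => stabSub (coact σ ρ a) f) ∘ (coact σ ρ a d) := by
      funext f
      exact stab_coact_conj hT σ ρ hσρ ha d f
    rw [this, ← Measure.map_map (measurable_stab_coact hT σ ρ hσρ ha)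
      (coact_measurable σ ρ ha d), coact_map hT σ ρ hσρ hν ha d]
    rfl

omit ha hν in
/-- the formula for `ρ` on the core -/
lemma rho_core {d : Δ} (hd : d ∈ Γ.normalCore) (t : T) :
    ((ρ d⁻¹ t : ↥Γ) : Δ) = (t : Δ)⁻¹ * d⁻¹ * (t : Δ) := by
  have hσ : σ d⁻¹ t = t :=
    (mem_core_iff_sigma hT σ ρ hσρ d⁻¹).mp (Γ.normalCore.inv_mem hd) t
  have h := hσρ d⁻¹ t
  rw [hσ] at h
  have : (t : Δ)⁻¹ * (d⁻¹ * (t : Δ)) = ((ρ d⁻¹ t : ↥Γ) : Δ) := by rw [h]; group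
  rw [← this]; group

/-- main computation, non-core case -/
lemma typeM_coact_notCore {F : Finset Δ} (hF : ¬ (F : Set Δ) ⊆ (Γ.normalCore : Set Δ)) :
    typeM (coact σ ρ a) ν (NSet (F : Set Δ)) = 0 := by
  obtain ⟨δ, hδF, hδ⟩ : ∃ δ ∈ F, δ ∉ Γ.normalCore := by
    by_contra h
    push_neg at h
    exact hF fun d hd => h d hd
  have hδ' : δ⁻¹ ∉ Γ.normalCore := fun h => hδ (by simpa using Γ.normalCore.inv_mem h)
  obtain ⟨t₀, ht₀⟩ : ∃ t : T, σ δ⁻¹ t ≠ t := by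
    by_contra h
    push_neg at h
    exact hδ' ((mem_core_iff_sigma hT σ ρ hσρ δ⁻¹).mpr h)
  set s₀ : T := σ δ⁻¹ t₀ with hs₀
  set g : X → X := a (ρ δ⁻¹ t₀)⁻¹ with hg
  have hgm : Measurable g := ha.1 _
  rw [typeM, Measure.map_apply (measurable_stab_coact hT σ ρ hσρ ha)
    (measurableSet_NSet _ F.countable_toSet)]
  apply measure_mono_null (t := {f : T → X | g (f s₀) = f t₀})
  · intro f hf
    have hmem : δ ∈ stabSub (coact σ ρ a) f := by
      have : (F : Set Δ) ⊆ (stabSub (coact σ ρ a) f : Set Δ) := hf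
      exact this hδF
    have heq : coact σ ρ a δ f = f := (mem_stab_coact hT σ ρ hσρ ha).mp hmem
    have := congrFun heq t₀
    exact this
  -- ν {f | g (f s₀) = f t₀} = 0
  · have hs₀t₀ : s₀ ≠ t₀ := ht₀
    classical
    set π : (T → X) → X × X := fun f => (f s₀, f t₀) with hπ
    have hπm : Measurable π := (measurable_pi_apply s₀).prodMk (measurable_pi_apply t₀)
    have hmapπ : Measure.map π ν = μ.prod μ := by
      refine (Measure.prod_eq ?_).symm
      intro A B hA hB
      rw [Measure.map_apply hπm (hA.prod hB)]
      set fam : T → Set X := fun i => if i = s₀ then A else if i = t₀ then B else Set.univ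
        with hfam
      have hfamm : ∀ i, MeasurableSet (fam i) := by
        intro i
        simp only [hfam]
        split_ifs <;> first | exact hA | exact hB | exact MeasurableSet.univ
      have hset : π ⁻¹' (A ×ˢ B) = {x : T → X | ∀ i ∈ ({s₀, t₀} : Finset T), x i ∈ fam i} := by
        ext x
        simp only [Set.mem_preimage, Set.mem_prod, Set.mem_setOf_eq, Finset.mem_insert,
          Finset.mem_singleton, hfam, hπ]
        constructor
        · rintro ⟨h1, h2⟩ i hi
          rcases hi with rfl | rfl
          · simp [h1]
          · simp [hs₀t₀.symm, h2]
        · intro h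
          refine ⟨?_, ?_⟩
          · have := h s₀ (Or.inl rfl)
            simpa using this
          · have := h t₀ (Or.inr rfl)
            simpa [hs₀t₀.symm] using this
      rw [hset, hν.2 _ _ hfamm, Finset.prod_pair hs₀t₀]
      simp [hfam, hs₀t₀.symm]
    set D : Set (X × X) := {p : X × X | g p.1 = p.2} with hD
    have hDm : MeasurableSet D := measurableSet_eqFun (hgm.comp measurable_fst) measurable_snd
    have hDset : {f : T → X | g (f s₀) = f t₀} = π ⁻¹' D := rfl
    rw [hDset, ← Measure.map_apply hπm hDm, hmapπ, Measure.prod_apply hDm]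
    have : ∀ x : X, μ (Prod.mk x ⁻¹' D) = 0 := by
      intro x
      have : Prod.mk x ⁻¹' D = {g x} := by
        ext y
        simp [hD, eq_comm]
      rw [this]
      exact measure_singleton _
    simp [this]

/-- main computation, core case -/
lemma typeM_coact_core {F : Finset Δ} (hF : (F : Set Δ) ⊆ (Γ.normalCore : Set Δ)) :
    typeM (coact σ ρ a) ν (NSet (F : Set Δ)) =
      ∏' t : T, (typeM a μ) (NpullSet Γ ((fun d => (t : Δ)⁻¹ * d * (t : Δ)) '' (F : Set Δ))) := by
  haveI := hν.1
  set A : T → Set X := fun t =>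
    (fun x : X => stabSub a x) ⁻¹' (NpullSet Γ ((fun d => (t : Δ)⁻¹ * d * (t : Δ)) '' (F : Set Δ)))
    with hA
  have hAm : ∀ t, MeasurableSet (A t) :=
    fun t => (measurable_stab_a ha) (measurableSet_NpullSet _)
  have hrho : ∀ d ∈ F, ∀ t : T, ((ρ d⁻¹ t : ↥Γ) : Δ) = (t : Δ)⁻¹ * d⁻¹ * (t : Δ) :=
    fun d hd t => rho_core hT σ ρ hσρ (hF hd) t
  have hσfix : ∀ d ∈ F, ∀ t : T, σ d⁻¹ t = t := fun d hd t =>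
    (mem_core_iff_sigma hT σ ρ hσρ d⁻¹).mp (Γ.normalCore.inv_mem (hF hd)) t
  -- the key set identity
  have hset : (fun f : T → X => stabSub (coact σ ρ a) f) ⁻¹' NSet (F : Set Δ)
      = {f : T → X | ∀ t : T, f t ∈ A t} := by
    ext f
    simp only [Set.mem_preimage, NSet, Set.mem_setOf_eq]
    constructor
    · intro h t
      show stabSub a (f t) ∈ NpullSet Γ _
      intro γ hγ
      obtain ⟨d, hdF, hco⟩ := hγ
      have hdmem : d ∈ stabSub (coact σ ρ a) f := h hdF
      have heq := congrFun ((mem_stab_coact hT σ ρ hσρ ha).mp hdmem) t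
      have heq2 : a (ρ d⁻¹ t)⁻¹ (f t) = f t := by
        have : coact σ ρ a d f t = a (ρ d⁻¹ t)⁻¹ (f (σ d⁻¹ t)) := rfl
        rw [this, hσfix d hdF t] at heq
        exact heq
      have hγeq : γ = (ρ d⁻¹ t)⁻¹ := by
        apply Subtype.ext
        show (γ : Δ) = ((ρ d⁻¹ t : ↥Γ) : Δ)⁻¹
        have hco' : (t : Δ)⁻¹ * d * (t : Δ) = (γ : Δ) := hco
        rw [hrho d hdF t, ← hco']
        group
      rw [hγeq, mem_stabSub ha.2.2.1 ha.2.2.2]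
      exact heq2
    · intro h d hdF
      rw [SetLike.mem_coe, mem_stab_coact hT σ ρ hσρ ha]
      funext t
      show a (ρ d⁻¹ t)⁻¹ (f (σ d⁻¹ t)) = f t
      rw [hσfix d hdF t]
      have hm := h t
      have : stabSub a (f t) ∈ NpullSet Γ ((fun d => (t : Δ)⁻¹ * d * (t : Δ)) '' (F : Set Δ))
        := hm
      have hmem : (ρ d⁻¹ t)⁻¹ ∈ stabSub a (f t) := by
        apply this
        refine ⟨d, hdF, ?_⟩
        show (t : Δ)⁻¹ * d * (t : Δ) = (((ρ d⁻¹ t)⁻¹ : ↥Γ) : Δ)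
        have : (((ρ d⁻¹ t)⁻¹ : ↥Γ) : Δ) = ((ρ d⁻¹ t : ↥Γ) : Δ)⁻¹ := rfl
        rw [this, hrho d hdF t]
        group
      rw [mem_stabSub ha.2.2.1 ha.2.2.2] at hmem
      exact hmem
  rw [typeM, Measure.map_apply (measurable_stab_coact hT σ ρ hσρ ha)
    (measurableSet_NSet _ F.countable_toSet), hset, prodMeasure_box hν hAm]
  have hle : ∀ t : T, μ (A t) ≤ 1 := fun t => prob_le_one
  haveI : IsProbabilityMeasure (typeM a μ) :=
    Measure.isProbabilityMeasure_map (measurable_stab_a ha).aemeasurable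
  rw [tprod_eq_iInf (c := fun t : T =>
    (typeM a μ) (NpullSet Γ ((fun d => (t : Δ)⁻¹ * d * (t : Δ)) '' (F : Set Δ))))
    (fun t => prob_le_one)]
  apply iInf_congr
  intro s
  apply Finset.prod_congr rfl
  intro t _
  rw [typeM, Measure.map_apply (measurable_stab_a ha) (measurableSet_NpullSet _), hA]

end Main

/-- The type of the co-induced action equals the co-induced IRS of the type:
`type(CIND_Γ^Δ(a)) = CIND_Γ^Δ(type(a))` (expressed by saying that `type(CIND_Γ^Δ(a))` is an
IRS of `Δ` satisfying the defining property of `CIND_Γ^Δ(type(a))`, which determines it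
uniquely).  In particular, if `type(a) = type(a')` then the co-induced actions have the
same type.  Here `T` is a transversal for `Δ/Γ`, `σ(δ,t) ∈ T` and `ρ(δ,t) ∈ Γ` are
determined by `δt = σ(δ,t)ρ(δ,t)`, and the co-induced action of `a` on `X^T` is
`(δ·f)(t) = a(ρ(δ⁻¹,t)⁻¹, f(σ(δ⁻¹,t)))`. -/

theorem type_coinduced_action {Δ : Type*} [Group Δ] [Countable Δ] (Γ : Subgroup Δ)
    {X : Type*} [MeasurableSpace X] [StandardBorelSpace X]
    (μ : Measure X) [IsProbabilityMeasure μ] [NullSingletonClass μ]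
    (T : Set Δ) (hT : IsLeftTransversal Γ T)
    (σ : Δ → T → T) (ρ : Δ → T → ↥Γ)
    (hσρ : ∀ (δ : Δ) (t : T), δ * (t : Δ) = (σ δ t : Δ) * ((ρ δ t : ↥Γ) : Δ))
    (ν : Measure (T → X)) (hν : IsProdMeasure μ ν)
    (a : ↥Γ → X → X) (ha : IsMPAction a μ) :
    (IsIRS (typeM (fun (δ : Δ) (f : T → X) (t : T) => a (ρ δ⁻¹ t)⁻¹ (f (σ δ⁻¹ t))) ν) ∧
      CindSpec Γ T (typeM a μ)
        (typeM (fun (δ : Δ) (f : T → X) (t : T) => a (ρ δ⁻¹ t)⁻¹ (f (σ δ⁻¹ t))) ν)) ∧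
    ∀ a' : ↥Γ → X → X, IsMPAction a' μ → typeM a' μ = typeM a μ →
      typeM (fun (δ : Δ) (f : T → X) (t : T) => a' (ρ δ⁻¹ t)⁻¹ (f (σ δ⁻¹ t))) ν =
      typeM (fun (δ : Δ) (f : T → X) (t : T) => a (ρ δ⁻¹ t)⁻¹ (f (σ δ⁻¹ t))) ν := by
  have hb : (fun (δ : Δ) (f : T → X) (t : T) => a (ρ δ⁻¹ t)⁻¹ (f (σ δ⁻¹ t))) = coact σ ρ a := rfl
  refine ⟨⟨?_, ?_⟩, ?_⟩
  · rw [hb]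
    exact isIRS_type_coact hT σ ρ hσρ hν ha
  · rw [hb]
    intro F
    exact ⟨fun h => typeM_coact_notCore hT σ ρ hσρ hν ha h,
      fun h => typeM_coact_core hT σ ρ hσρ hν ha h⟩
  · intro a' ha' htype
    have hb' : (fun (δ : Δ) (f : T → X) (t : T) => a' (ρ δ⁻¹ t)⁻¹ (f (σ δ⁻¹ t)))
        = coact σ ρ a' := rfl
    rw [hb, hb']
    haveI := (isIRS_type_coact hT σ ρ hσρ hν ha).1
    haveI := (isIRS_type_coact hT σ ρ hσρ hν ha').1
    apply sub_measure_ext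
    intro F
    by_cases hF : (F : Set Δ) ⊆ (Γ.normalCore : Set Δ)
    · rw [typeM_coact_core hT σ ρ hσρ hν ha' hF, typeM_coact_core hT σ ρ hσρ hν ha hF, htype]
    · rw [typeM_coact_notCore hT σ ρ hσρ hν ha' hF, typeM_coact_notCore hT σ ρ hσρ hν ha hF]


end IRSPaper
end

section
/- Let Γ ≤ Δ be countable discrete groups, T ⊆ Δ a transversal for the left cosets Δ/Γ, and a ∈ A(Γ,X,μ) a measure-preserving action. Then the co-induced action CIND_Γ^Δ(a) is not essentially free if and only if there exists γ ∈ core_Δ(Γ) \ {e} such that ∑_{t∈T} (1 − μ(Fix_a(t⁻¹γt))) < ∞ and μ(Fix_a(t⁻¹γt)) > 0 for all t ∈ T. -/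
open MeasureTheory

namespace IRSPaper


section AuxiliaryLemmas

open ENNReal



lemma aux_one_add_sum_le {ι : Type*} (x : ι → ℝ≥0∞) (F : Finset ι) :
    1 + ∑ i ∈ F, x i ≤ ∏ i ∈ F, (1 + x i) := by
  classical
  induction F using Finset.induction_on with
  | empty => simp
  | @insert a F ha ih =>
    rw [Finset.sum_insert ha, Finset.prod_insert ha]
    calc 1 + (x a + ∑ i ∈ F, x i) = (1 + ∑ i ∈ F, x i) + x a * 1 := by ring
      _ ≤ (1 + x a) * ∏ i ∈ F, (1 + x i) := by
          calc (1 + ∑ i ∈ F, x i) + x a * 1 ≤ (∏ i ∈ F, (1 + x i)) + x a * ∏ i ∈ F, (1 + x i) :=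
                add_le_add ih (mul_le_mul_right (le_trans le_self_add ih) (x a))
            _ = (1 + x a) * ∏ i ∈ F, (1 + x i) := by ring

lemma aux_sum_lt_top {ι : Type*} {p : ι → ℝ≥0∞} (hp : ∀ i, p i ≤ 1)
    {c : ℝ≥0∞} (hc : c ≠ 0) (h : ∀ F : Finset ι, c ≤ ∏ i ∈ F, p i) :
    ∑' i, (1 - p i) < ⊤ := by
  have key : ∀ F : Finset ι, (∑ i ∈ F, (1 - p i)) ≤ c⁻¹ := by
    intro F
    rw [ENNReal.le_inv_iff_mul_le]
    calc (∑ i ∈ F, (1 - p i)) * c ≤ (∏ i ∈ F, (1 + (1 - p i))) * (∏ i ∈ F, p i) := by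
          gcongr
          · exact le_trans (by simp) (aux_one_add_sum_le _ F)
          · exact h F
      _ = ∏ i ∈ F, ((1 + (1 - p i)) * p i) := by rw [← Finset.prod_mul_distrib]
      _ ≤ ∏ i ∈ F, 1 := by
          apply Finset.prod_le_prod' 
          intro i _
          calc (1 + (1 - p i)) * p i = p i + (1 - p i) * p i := by ring
            _ ≤ p i + (1 - p i) * 1 := by gcongr; exact hp i
            _ = 1 := by rw [mul_one, add_tsub_cancel_of_le (hp i)]
      _ = 1 := by simp
  have : ∑' i, (1 - p i) ≤ c⁻¹ := by
    rw [ENNReal.tsum_eq_iSup_sum]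
    exact iSup_le key
  exact lt_of_le_of_lt this (ENNReal.inv_lt_top.2 (pos_iff_ne_zero.2 hc))



lemma exists_small_cover {X : Type*} [MeasurableSpace X] [StandardBorelSpace X]
    (μ : Measure X) [IsProbabilityMeasure μ] [NullSingletonClass μ] {ε : ℝ≥0∞} (hε : ε ≠ 0) :
    ∃ A : ℕ → Set X, (∀ n, MeasurableSet (A n)) ∧ (⋃ n, A n) = Set.univ ∧
      (∀ n, μ (A n) ≤ ε) ∧ ∑' n, μ (A n) ≤ 1 := by
  obtain ⟨f, hf⟩ := exists_measurableEmbedding_real X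
  set ν := Measure.map f μ with hν
  haveI : IsProbabilityMeasure ν := Measure.isProbabilityMeasure_map hf.measurable.aemeasurable
  haveI : NullSingletonClass ν := by
    constructor
    intro y
    rw [hν, hf.map_apply]
    exact Set.Subsingleton.measure_zero (fun x hx x' hx' => hf.injective (hx.trans hx'.symm)) μ
  have hU : ∀ y : ℝ, ∃ U : Set ℝ, y ∈ U ∧ IsOpen U ∧ ν U < ε := by
    intro y
    obtain ⟨U, hsub, hop, hlt⟩ := Set.exists_isOpen_lt_of_lt (μ := ν) {y} ε
      (by rw [measure_singleton]; exact pos_iff_ne_zero.2 hε)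
    exact ⟨U, hsub rfl, hop, hlt⟩
  choose U hmem hopen hlt using hU
  obtain ⟨T, hTc, hTu⟩ := TopologicalSpace.isOpen_iUnion_countable U hopen
  have huniv : ⋃ y ∈ T, U y = Set.univ := by
    rw [hTu]
    exact Set.eq_univ_of_forall fun y => Set.mem_iUnion.2 ⟨y, hmem y⟩
  have hTne : T.Nonempty := by
    rcases Set.eq_empty_or_nonempty T with h | h
    · exfalso
      rw [h] at huniv
      simp only [Set.mem_empty_iff_false, Set.iUnion_of_empty, Set.iUnion_empty] at huniv
      exact (Set.univ_nonempty.mono huniv.symm.subset).ne_empty rfl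
    · exact h
  obtain ⟨g, hg⟩ := Set.Countable.exists_eq_range hTc hTne
  set V : ℕ → Set ℝ := fun n => U (g n) with hV
  have hVuniv : ⋃ n, V n = Set.univ := by
    rw [← huniv, hg]
    ext y
    simp [hV]
  set B := disjointed V with hB
  have hBm : ∀ n, MeasurableSet (B n) :=
    MeasurableSet.disjointed (fun n => (hopen _).measurableSet)
  refine ⟨fun n => f ⁻¹' B n, fun n => hf.measurable (hBm n), ?_, ?_, ?_⟩
  · rw [← Set.preimage_iUnion, hB, iUnion_disjointed, hVuniv, Set.preimage_univ]
  · intro n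
    have h1 : μ (f ⁻¹' B n) = ν (B n) := (Measure.map_apply hf.measurable (hBm n)).symm
    rw [h1]
    exact ((measure_mono (disjointed_subset V n)).trans_lt (hlt _)).le
  · have h2 : ∀ n, μ (f ⁻¹' B n) = ν (B n) :=
      fun n => (Measure.map_apply hf.measurable (hBm n)).symm
    calc ∑' n, μ (f ⁻¹' B n) = ∑' n, ν (B n) := by simp_rw [h2]
      _ = ν (⋃ n, B n) := (measure_iUnion (disjoint_disjointed V) hBm).symm
      _ ≤ 1 := prob_le_one



section Helpers

variable {Δ : Type*} [Group Δ] (Γ : Subgroup Δ) (T : Set Δ)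

theorem sigma_fix_of_conj_mem (hT : IsLeftTransversal Γ T)
    (σ : Δ → T → T) (ρ : Δ → T → ↥Γ)
    (hσρ : ∀ (δ : Δ) (t : T), δ * (t : Δ) = (σ δ t : Δ) * ((ρ δ t : ↥Γ) : Δ))
    (δ : Δ) (t : T) (h : (t : Δ)⁻¹ * δ * (t : Δ) ∈ Γ) : σ δ⁻¹ t = t := by
  obtain ⟨u, -, huniq⟩ := hT (δ⁻¹ * (t : Δ))
  have h1 : (σ δ⁻¹ t : Δ) = u := by
    apply huniq
    refine ⟨(σ δ⁻¹ t).2, ?_⟩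
    have key : (δ⁻¹ * (t : Δ))⁻¹ * (σ δ⁻¹ t : Δ) = (((ρ δ⁻¹ t)⁻¹ : ↥Γ) : Δ) := by
      rw [hσρ δ⁻¹ t]
      push_cast
      group
    rw [key]
    exact SetLike.coe_mem _
  have h2 : (t : Δ) = u := by
    apply huniq
    refine ⟨t.2, ?_⟩
    have key : (δ⁻¹ * (t : Δ))⁻¹ * (t : Δ) = (t : Δ)⁻¹ * δ * (t : Δ) := by group
    rw [key]
    exact h
  exact Subtype.ext (h1.trans h2.symm)

theorem conj_mem_of_sigma_fix
    (σ : Δ → T → T) (ρ : Δ → T → ↥Γ)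
    (hσρ : ∀ (δ : Δ) (t : T), δ * (t : Δ) = (σ δ t : Δ) * ((ρ δ t : ↥Γ) : Δ))
    (δ : Δ) (t : T) (h : σ δ⁻¹ t = t) : (t : Δ)⁻¹ * δ * (t : Δ) ∈ Γ := by
  have h1 := hσρ δ⁻¹ t
  rw [h] at h1
  have key : (t : Δ)⁻¹ * δ * (t : Δ) = (((ρ δ⁻¹ t)⁻¹ : ↥Γ) : Δ) := by
    push_cast
    have : ((ρ δ⁻¹ t : ↥Γ) : Δ) = (t : Δ)⁻¹ * (δ⁻¹ * (t : Δ)) := by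
      rw [h1]; group
    rw [this]; group
  rw [key]
  exact SetLike.coe_mem _

theorem rho_coe_of_sigma_fix
    (σ : Δ → T → T) (ρ : Δ → T → ↥Γ)
    (hσρ : ∀ (δ : Δ) (t : T), δ * (t : Δ) = (σ δ t : Δ) * ((ρ δ t : ↥Γ) : Δ))
    (δ : Δ) (t : T) (h : σ δ⁻¹ t = t) :
    (((ρ δ⁻¹ t)⁻¹ : ↥Γ) : Δ) = (t : Δ)⁻¹ * δ * (t : Δ) := by
  have h1 := hσρ δ⁻¹ t
  rw [h] at h1
  push_cast
  have : ((ρ δ⁻¹ t : ↥Γ) : Δ) = (t : Δ)⁻¹ * (δ⁻¹ * (t : Δ)) := by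
    rw [h1]; group
  rw [this]; group

theorem mem_core_iff_conj (hT : IsLeftTransversal Γ T) (δ : Δ) :
    δ ∈ Γ.normalCore ↔ ∀ t : T, (t : Δ)⁻¹ * δ * (t : Δ) ∈ Γ := by
  constructor
  · intro h t
    have := h (t : Δ)⁻¹
    rwa [inv_inv] at this
  · intro h b
    obtain ⟨t, ⟨htT, htb⟩, -⟩ := hT b⁻¹
    have h1 : b * t ∈ Γ := by rwa [inv_inv] at htb
    have h2 := h ⟨t, htT⟩
    have key : b * δ * b⁻¹ = (b * t) * (t⁻¹ * δ * t) * (b * t)⁻¹ := by group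
    rw [key]
    exact mul_mem (mul_mem h1 h2) (inv_mem h1)

end Helpers




end AuxiliaryLemmas

open ENNReal in
/-- Characterization of non-freeness of the co-induced action: `CIND_Γ^Δ(a)` is not
(essentially) free iff there is `γ ∈ core_Δ(Γ) \ {e}` with
`∑_{t∈T} (1 - μ(Fix_a(t⁻¹γt))) < ∞` and `μ(Fix_a(t⁻¹γt)) > 0` for all `t ∈ T`.
Here the set `{x | ∀ g : Γ, ↑g = t⁻¹γt → a g x = x}` is exactly `Fix_a(t⁻¹γt)` when
`γ ∈ core_Δ(Γ)` (so that `t⁻¹γt ∈ Γ`). -/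
theorem coinduced_action_not_free_iff {Δ : Type*} [Group Δ] [Countable Δ] (Γ : Subgroup Δ)
    {X : Type*} [MeasurableSpace X] [StandardBorelSpace X]
    (μ : Measure X) [IsProbabilityMeasure μ] [NullSingletonClass μ]
    (T : Set Δ) (hT : IsLeftTransversal Γ T)
    (σ : Δ → T → T) (ρ : Δ → T → ↥Γ)
    (hσρ : ∀ (δ : Δ) (t : T), δ * (t : Δ) = (σ δ t : Δ) * ((ρ δ t : ↥Γ) : Δ))
    (a : ↥Γ → X → X) (ha : IsMPAction a μ)
    (ν : Measure (T → X)) (hν : IsProdMeasure μ ν) :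
    (∃ δ : Δ, δ ≠ 1 ∧
        ν {f : T → X | (fun t : T => a (ρ δ⁻¹ t)⁻¹ (f (σ δ⁻¹ t))) = f} ≠ 0) ↔
      ∃ γ : Δ, γ ∈ Γ.normalCore ∧ γ ≠ 1 ∧
        (∑' t : T,
          (1 - μ {x : X | ∀ g : ↥Γ, (g : Δ) = (t : Δ)⁻¹ * γ * (t : Δ) → a g x = x})) < ⊤ ∧
        ∀ t : T, 0 < μ {x : X | ∀ g : ↥Γ, (g : Δ) = (t : Δ)⁻¹ * γ * (t : Δ) → a g x = x} := by
  classical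
  obtain ⟨hνprob, hcyl⟩ := hν
  haveI := hνprob
  obtain ⟨hameas, hapres, -, -⟩ := ha
  -- the fixed-point sets
  set E : Δ → T → Set X :=
    fun δ t => {x : X | ∀ g : ↥Γ, (g : Δ) = (t : Δ)⁻¹ * δ * (t : Δ) → a g x = x} with hEdef
  have hEeq : ∀ (δ : Δ) (t : T) (g₀ : ↥Γ), (g₀ : Δ) = (t : Δ)⁻¹ * δ * (t : Δ) →
      E δ t = {x : X | a g₀ x = x} := by
    intro δ t g₀ hg₀
    ext x
    constructor
    · intro h; exact h g₀ hg₀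
    · intro h g hg
      have : g = g₀ := Subtype.ext (hg.trans hg₀.symm)
      rwa [this]
  have hfixmeas : ∀ g₀ : ↥Γ, MeasurableSet {x : X | a g₀ x = x} := by
    intro g₀
    letI := upgradeStandardBorel X
    have heq : {x : X | a g₀ x = x} = (fun x => (a g₀ x, x)) ⁻¹' {p : X × X | p.1 = p.2} := rfl
    rw [heq]
    exact ((hameas g₀).prodMk measurable_id)
      (isClosed_eq continuous_fst continuous_snd).measurableSet
  have hEmeas : ∀ (δ : Δ) (t : T), (t : Δ)⁻¹ * δ * (t : Δ) ∈ Γ → MeasurableSet (E δ t) := by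
    intro δ t h
    rw [hEeq δ t ⟨_, h⟩ rfl]
    exact hfixmeas _
  -- fixed set description for core elements
  have hfixset : ∀ δ : Δ, (∀ t : T, σ δ⁻¹ t = t) →
      {f : T → X | (fun t : T => a (ρ δ⁻¹ t)⁻¹ (f (σ δ⁻¹ t))) = f} =
        {f : T → X | ∀ t : T, f t ∈ E δ t} := by
    intro δ hσfix
    ext f
    simp only [Set.mem_setOf_eq, funext_iff]
    apply forall_congr'
    intro t
    rw [hσfix t, hEeq δ t ((ρ δ⁻¹ t)⁻¹) (rho_coe_of_sigma_fix Γ T σ ρ hσρ δ t (hσfix t))]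
    exact Iff.rfl
  constructor
  · rintro ⟨δ, hδ1, hδν⟩
    by_cases hcore : δ ∈ Γ.normalCore
    · have hconj : ∀ t : T, (t : Δ)⁻¹ * δ * (t : Δ) ∈ Γ := (mem_core_iff_conj Γ T hT δ).1 hcore
      have hσfix : ∀ t : T, σ δ⁻¹ t = t := fun t => sigma_fix_of_conj_mem Γ T hT σ ρ hσρ δ t (hconj t)
      rw [hfixset δ hσfix] at hδν
      have hple : ∀ t : T, μ (E δ t) ≤ 1 := fun t => prob_le_one
      have hsub : ∀ F : Finset T, ν {f : T → X | ∀ t : T, f t ∈ E δ t} ≤ ∏ i ∈ F, μ (E δ i) := by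
        intro F
        calc ν {f : T → X | ∀ t : T, f t ∈ E δ t}
            ≤ ν {f : T → X | ∀ i ∈ F, f i ∈ E δ i} := measure_mono (fun f hf i _ => hf i)
          _ = ∏ i ∈ F, μ (E δ i) := hcyl F _ (fun i => hEmeas δ i (hconj i))
      refine ⟨δ, hcore, hδ1, ?_, ?_⟩
      · exact aux_sum_lt_top hple hδν hsub
      · intro t
        have h1 : ν {f : T → X | ∀ t : T, f t ∈ E δ t} ≤ μ (E δ t) := by
          calc ν {f : T → X | ∀ t : T, f t ∈ E δ t} ≤ ∏ i ∈ ({t} : Finset T), μ (E δ i) :=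
                hsub {t}
            _ = μ (E δ t) := by simp
        exact lt_of_lt_of_le (pos_iff_ne_zero.2 hδν) h1
    · exfalso
      apply hδν
      have hex : ∃ t : T, (t : Δ)⁻¹ * δ * (t : Δ) ∉ Γ := by
        by_contra h
        push_neg at h
        exact hcore ((mem_core_iff_conj Γ T hT δ).2 h)
      obtain ⟨t₀, ht₀⟩ := hex
      have hne : σ δ⁻¹ t₀ ≠ t₀ := fun h => ht₀ (conj_mem_of_sigma_fix Γ T σ ρ hσρ δ t₀ h)
      set t₁ := σ δ⁻¹ t₀ with ht₁
      set φ : X → X := a ((ρ δ⁻¹ t₀)⁻¹) with hφ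
      have hφm : Measurable φ := hameas _
      have hφp : Measure.map φ μ = μ := hapres _
      have hsub : {f : T → X | (fun t : T => a (ρ δ⁻¹ t)⁻¹ (f (σ δ⁻¹ t))) = f} ⊆
          {f : T → X | f t₀ = φ (f t₁)} := by
        intro f hf
        exact (congrFun hf t₀).symm
      have hbound : ∀ ε : ℝ≥0∞, ε ≠ 0 → ν {f : T → X | f t₀ = φ (f t₁)} ≤ ε := by
        intro ε hε
        obtain ⟨A, hAm, hAu, hAle, hAsum⟩ := exists_small_cover μ hε
        have hsub2 : {f : T → X | f t₀ = φ (f t₁)} ⊆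
            ⋃ n : ℕ, {f : T → X | ∀ i ∈ ({t₀, t₁} : Finset T),
              f i ∈ (fun i : T => if i = t₀ then A n else φ ⁻¹' A n) i} := by
          intro f hf
          have hmem : f t₀ ∈ ⋃ n, A n := by rw [hAu]; trivial
          obtain ⟨n, hn⟩ := Set.mem_iUnion.1 hmem
          refine Set.mem_iUnion.2 ⟨n, ?_⟩
          intro i hi
          rcases Finset.mem_insert.1 hi with rfl | hi1
          · simpa using hn
          · have hit : i = t₁ := Finset.mem_singleton.1 hi1
            subst hit
            simp only [if_neg hne]
            show φ (f t₁) ∈ A n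
            rw [← hf]
            exact hn
        calc ν {f : T → X | f t₀ = φ (f t₁)}
            ≤ ∑' n : ℕ, ν {f : T → X | ∀ i ∈ ({t₀, t₁} : Finset T),
                f i ∈ (fun i : T => if i = t₀ then A n else φ ⁻¹' A n) i} :=
              le_trans (measure_mono hsub2) (measure_iUnion_le _)
          _ = ∑' n : ℕ, μ (A n) * μ (φ ⁻¹' A n) := by
              congr 1
              funext n
              rw [hcyl ({t₀, t₁} : Finset T) _ (fun i => by
                split_ifs
                · exact hAm n
                · exact hφm (hAm n))]
              rw [Finset.prod_pair (fun h => hne (h.symm))]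
              simp [if_neg hne]
          _ ≤ ∑' n : ℕ, ε * μ (φ ⁻¹' A n) := by
              apply ENNReal.tsum_le_tsum
              intro n
              exact mul_le_mul_left (hAle n) _
          _ = ε * ∑' n : ℕ, μ (A n) := by
              rw [ENNReal.tsum_mul_left]
              congr 1
              exact tsum_congr fun n => by rw [← Measure.map_apply hφm (hAm n), hφp]
          _ ≤ ε * 1 := mul_le_mul_right hAsum ε
          _ = ε := mul_one ε
      have h0 : ν {f : T → X | f t₀ = φ (f t₁)} = 0 := by
        by_contra hne0
        have hhalf := hbound (ν {f : T → X | f t₀ = φ (f t₁)} / 2)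
          (by simp [ENNReal.div_eq_zero_iff, hne0])
        exact absurd hhalf (not_le.2 (ENNReal.half_lt_self hne0 (measure_ne_top ν _)))
      exact le_antisymm (le_trans (measure_mono hsub) h0.le) (zero_le)
  · rintro ⟨γ, hγcore, hγ1, hsum, hpos⟩
    have hconj : ∀ t : T, (t : Δ)⁻¹ * γ * (t : Δ) ∈ Γ := (mem_core_iff_conj Γ T hT γ).1 hγcore
    have hσfix : ∀ t : T, σ γ⁻¹ t = t := fun t => sigma_fix_of_conj_mem Γ T hT σ ρ hσρ γ t (hconj t)
    refine ⟨γ, hγ1, ?_⟩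
    rw [hfixset γ hσfix]
    intro h0
    have hple : ∀ t : T, μ (E γ t) ≤ 1 := fun t => prob_le_one
    -- choose a finite set with small tail
    have htail := ENNReal.tendsto_tsum_compl_atTop_zero (f := fun t : T => 1 - μ (E γ t)) hsum.ne
    have hev := htail.eventually (gt_mem_nhds (by norm_num : (0 : ℝ≥0∞) < 1/2))
    obtain ⟨F₀, hF₀⟩ := Filter.eventually_atTop.1 hev
    have htail2 : ∑' t : {t : T // t ∉ F₀}, (1 - μ (E γ (t : T))) < 1/2 := hF₀ F₀ le_rfl
    set c := ∏ t ∈ F₀, μ (E γ t) with hc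
    have hc0 : c ≠ 0 := by
      rw [hc, Finset.prod_ne_zero_iff]
      exact fun t _ => (hpos t).ne'
    have hcT : c ≠ ⊤ := by
      have : c ≤ 1 := le_trans (Finset.prod_le_prod' (fun i _ => hple i)) (by simp)
      exact ne_top_of_le_ne_top one_ne_top this
    have hcover : {f : T → X | ∀ i ∈ F₀, f i ∈ E γ i} ⊆
        {f : T → X | ∀ t : T, f t ∈ E γ t} ∪
          ⋃ t : {t : T // t ∉ F₀}, {f : T → X | ∀ i ∈ insert (t : T) F₀,
            f i ∈ (fun i : T => if i = (t : T) then (E γ (t : T))ᶜ else E γ i) i} := by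
      intro f hf
      by_cases hall : ∀ t : T, f t ∈ E γ t
      · exact Or.inl hall
      · right
        push_neg at hall
        obtain ⟨t, ht⟩ := hall
        have htF₀ : t ∉ F₀ := fun hmem => ht (hf t hmem)
        refine Set.mem_iUnion.2 ⟨⟨t, htF₀⟩, ?_⟩
        intro i hi
        rcases Finset.mem_insert.1 hi with rfl | hiF
        · simpa using ht
        · have hne : i ≠ t := fun h => htF₀ (h ▸ hiF)
          simpa [if_neg hne] using hf i hiF
    have hpiece : ∀ t : {t : T // t ∉ F₀},
        ν {f : T → X | ∀ i ∈ insert (t : T) F₀,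
            f i ∈ (fun i : T => if i = (t : T) then (E γ (t : T))ᶜ else E γ i) i} =
          c * (1 - μ (E γ (t : T))) := by
      intro t
      rw [hcyl (insert (t : T) F₀) _ (fun i => by
        split_ifs
        · exact (hEmeas γ _ (hconj _)).compl
        · exact hEmeas γ i (hconj i))]
      have h1 : μ (if ((t : T) = (t : T)) then (E γ (t : T))ᶜ else E γ (t : T))
          = 1 - μ (E γ (t : T)) := by
        rw [if_pos rfl, prob_compl_eq_one_sub (hEmeas γ _ (hconj _))]
      have h2 : ∀ i ∈ F₀, μ (if i = (t : T) then (E γ (t : T))ᶜ else E γ i) = μ (E γ i) := by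
        intro i hi
        have hne : i ≠ (t : T) := fun h => t.2 (h ▸ hi)
        rw [if_neg hne]
      rw [Finset.prod_insert t.2, h1, Finset.prod_congr rfl h2, hc]
      exact mul_comm _ _
    have hchain : c ≤ c * (1/2) := by
      calc c = ν {f : T → X | ∀ i ∈ F₀, f i ∈ E γ i} :=
            (hcyl F₀ _ (fun i => hEmeas γ i (hconj i))).symm
        _ ≤ ν ({f : T → X | ∀ t : T, f t ∈ E γ t} ∪
              ⋃ t : {t : T // t ∉ F₀}, {f : T → X | ∀ i ∈ insert (t : T) F₀,
                f i ∈ (fun i : T => if i = (t : T) then (E γ (t : T))ᶜ else E γ i) i}) :=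
            measure_mono hcover
        _ ≤ ν {f : T → X | ∀ t : T, f t ∈ E γ t} +
              ν (⋃ t : {t : T // t ∉ F₀}, {f : T → X | ∀ i ∈ insert (t : T) F₀,
                f i ∈ (fun i : T => if i = (t : T) then (E γ (t : T))ᶜ else E γ i) i}) :=
            measure_union_le _ _
        _ = ν (⋃ t : {t : T // t ∉ F₀}, {f : T → X | ∀ i ∈ insert (t : T) F₀,
                f i ∈ (fun i : T => if i = (t : T) then (E γ (t : T))ᶜ else E γ i) i}) := by
            rw [h0, zero_add]
        _ ≤ ∑' t : {t : T // t ∉ F₀}, ν {f : T → X | ∀ i ∈ insert (t : T) F₀,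
                f i ∈ (fun i : T => if i = (t : T) then (E γ (t : T))ᶜ else E γ i) i} :=
            measure_iUnion_le _
        _ = ∑' t : {t : T // t ∉ F₀}, c * (1 - μ (E γ (t : T))) := tsum_congr hpiece
        _ = c * ∑' t : {t : T // t ∉ F₀}, (1 - μ (E γ (t : T))) := ENNReal.tsum_mul_left
        _ ≤ c * (1/2) := mul_le_mul_right htail2.le c
    have : c * (1/2) < c := by
      have := ENNReal.half_lt_self hc0 hcT
      rwa [ENNReal.div_eq_inv_mul, ← one_div, mul_comm] at this
    exact absurd hchain (not_le.2 this)

end IRSPaper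
end

section
/- Let Λ ≤ Γ ≤ Δ be countable discrete groups and a ∈ A(Λ,X,μ). Then the measure-preserving Δ-actions CIND_Γ^Δ(CIND_Λ^Γ(a)) and CIND_Λ^Δ(a) are isomorphic. -/
open MeasureTheory

namespace IRSPaper


/-- The relational description of the co-induced action `b = CIND_Γ^Δ(a)` of
`Δ` on `X^{Δ/Γ}`, with respect to the section (transversal) `ιT : Δ/Γ → Δ`:
`(δ · f)(c) = ρ_T(δ⁻¹, ι_T(c))⁻¹ ·^a f(δ⁻¹ · c)`, where
`ρ_T(δ⁻¹, ι_T(c))⁻¹ = ι_T(c)⁻¹ δ ι_T(δ⁻¹ c) ∈ Γ`. -/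
def CoindRel {Δ X : Type*} [Group Δ] (Γ : Subgroup Δ) (ιT : Δ ⧸ Γ → Δ)
    (a : ↥Γ → X → X) (b : Δ → ((Δ ⧸ Γ) → X) → (Δ ⧸ Γ) → X) : Prop :=
  ∀ (δ : Δ) (f : (Δ ⧸ Γ) → X) (c : Δ ⧸ Γ) (γ : ↥Γ),
    (γ : Δ) = (ιT c)⁻¹ * δ * ιT (δ⁻¹ • c) → b δ f c = a γ (f (δ⁻¹ • c))
/-! ## Auxiliary lemmas for the chain rule -/

section CylAux
variable {ι X : Type*} [MeasurableSpace X]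

/-- A "box" cylinder set in a product space. -/
def cylSet (s : Finset ι) (f : ι → Set X) : Set (ι → X) := {x | ∀ i ∈ s, x i ∈ f i}

lemma measurableSet_cylSet (s : Finset ι) (f : ι → Set X) (hf : ∀ i, MeasurableSet (f i)) :
    MeasurableSet (cylSet s f) := by
  have h : cylSet s f = ⋂ i ∈ (s : Set ι), (fun x : ι → X => x i) ⁻¹' f i := by
    ext x; simp [cylSet]
  rw [h]
  exact MeasurableSet.biInter s.countable_toSet fun i _ => (measurable_pi_apply i) (hf i)

/-- The collection of box cylinder sets with measurable sides. -/
def cylSets (ι X : Type*) [MeasurableSpace X] : Set (Set (ι → X)) :=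
  {S | ∃ s : Finset ι, ∃ f : ι → Set X, (∀ i, MeasurableSet (f i)) ∧ S = cylSet s f}

lemma isPiSystem_cylSets : IsPiSystem (cylSets ι X) := by
  classical
  rintro S ⟨s, f, hf, rfl⟩ S' ⟨s', f', hf', rfl⟩ -
  refine ⟨s ∪ s',
    fun i => (if i ∈ s then f i else Set.univ) ∩ (if i ∈ s' then f' i else Set.univ),
    fun i => ?_, ?_⟩
  · refine MeasurableSet.inter ?_ ?_ <;> [skip; skip] <;> split <;>
      first | exact hf _ | exact hf' _ | exact MeasurableSet.univ
  · ext x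
    simp only [cylSet, Set.mem_inter_iff, Set.mem_setOf_eq, Finset.mem_union]
    constructor
    · rintro ⟨h1, h2⟩ i hi
      constructor <;> split <;> first | exact h1 _ ‹_› | exact h2 _ ‹_› | trivial
    · intro h
      constructor <;> intro i hi
      · have := (h i (Or.inl hi)).1; rwa [if_pos hi] at this
      · have := (h i (Or.inr hi)).2; rwa [if_pos hi] at this

lemma generateFrom_cylSets :
    (inferInstance : MeasurableSpace (ι → X)) =
      MeasurableSpace.generateFrom (cylSets ι X) := by
  classical
  refine le_antisymm (iSup_le fun i => ?_) (MeasurableSpace.generateFrom_le ?_)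
  · refine measurable_iff_comap_le.mp
      (?_ : @Measurable _ _ (MeasurableSpace.generateFrom (cylSets ι X)) _ (fun x => x i))
    intro t ht
    apply MeasurableSpace.measurableSet_generateFrom
    refine ⟨{i}, fun j => if j = i then t else Set.univ, fun j => ?_, ?_⟩
    · by_cases hji : j = i <;> simp [hji, ht]
    · ext x; simp [cylSet]
  · rintro S ⟨s, f, hf, rfl⟩
    exact measurableSet_cylSet s f hf

lemma prob_ext_of_cyl (μ ν : Measure (ι → X)) [IsProbabilityMeasure μ] [IsProbabilityMeasure ν]
    (h : ∀ (s : Finset ι) (f : ι → Set X), (∀ i, MeasurableSet (f i)) →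
      μ (cylSet s f) = ν (cylSet s f)) : μ = ν := by
  refine ext_of_generate_finite (cylSets ι X) generateFrom_cylSets isPiSystem_cylSets ?_ ?_
  · rintro S ⟨s, f, hf, rfl⟩
    exact h s f hf
  · simp

end CylAux

section CosetAux
variable {G : Type*} [Group G] {H : Subgroup G}

lemma transversal_mem {ι : G ⧸ H → G} (hι : ∀ c, (QuotientGroup.mk (ι c) : G ⧸ H) = c)
    (c : G ⧸ H) (g : G) : (ι c)⁻¹ * g * ι (g⁻¹ • c) ∈ H := by
  have h1 : (QuotientGroup.mk (g * ι (g⁻¹ • c)) : G ⧸ H) = c := by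
    have h2 : (QuotientGroup.mk (g * ι (g⁻¹ • c)) : G ⧸ H)
        = g • QuotientGroup.mk (ι (g⁻¹ • c)) := by
      rw [MulAction.Quotient.smul_mk, smul_eq_mul]
    rw [h2, hι, smul_smul, mul_inv_cancel, one_smul]
  have h3 := QuotientGroup.eq.mp ((hι c).trans h1.symm)
  rwa [← mul_assoc] at h3

lemma out_rel (g : G) (p : G ⧸ H) : (g * p.out)⁻¹ * (g • p).out ∈ H := by
  refine QuotientGroup.eq.mp ?_
  rw [QuotientGroup.out_eq', ← smul_eq_mul, ← MulAction.Quotient.smul_mk H g p.out,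
    QuotientGroup.out_eq']

end CosetAux


/-- **Proposition 3.2 (chain rule for co-induction).** For `Λ ≤ Γ ≤ Δ` and
`a ∈ A(Λ,X,μ)`, the actions `CIND_Γ^Δ(CIND_Λ^Γ(a))` and `CIND_Λ^Δ(a)` are isomorphic.
Here `b₁ = CIND_Λ^Γ(a)` acts on `Y = X^{Γ/Λ}` (with product measure `ν₁`),
`b₂ = CIND_Γ^Δ(b₁)` acts on `Y^{Δ/Γ}` (with product measure `ν₂`), and
`b₃ = CIND_Λ^Δ(a)` acts on `X^{Δ/Λ}` (with product measure `ν₃`). -/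
theorem coinduction_chain_rule
    {Δ : Type*} [Group Δ] [Countable Δ] (Λ Γ : Subgroup Δ) (hΛΓ : Λ ≤ Γ)
    {X : Type*} [MeasurableSpace X] [StandardBorelSpace X]
    (μ : Measure X) [IsProbabilityMeasure μ] [NullSingletonClass μ]
    (a : ↥Λ → X → X) (ha : IsMPAction a μ)
    (ι₁ : ↥Γ ⧸ (Λ.subgroupOf Γ) → ↥Γ)
    (hι₁ : ∀ c : ↥Γ ⧸ (Λ.subgroupOf Γ), (QuotientGroup.mk (ι₁ c) : ↥Γ ⧸ (Λ.subgroupOf Γ)) = c)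
    (ι₂ : Δ ⧸ Γ → Δ) (hι₂ : ∀ c : Δ ⧸ Γ, (QuotientGroup.mk (ι₂ c) : Δ ⧸ Γ) = c)
    (ι₃ : Δ ⧸ Λ → Δ) (hι₃ : ∀ c : Δ ⧸ Λ, (QuotientGroup.mk (ι₃ c) : Δ ⧸ Λ) = c)
    (ν₁ : Measure ((↥Γ ⧸ (Λ.subgroupOf Γ)) → X)) (hν₁ : IsProdMeasure μ ν₁)
    (ν₂ : Measure ((Δ ⧸ Γ) → (↥Γ ⧸ (Λ.subgroupOf Γ)) → X)) (hν₂ : IsProdMeasure ν₁ ν₂)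
    (ν₃ : Measure ((Δ ⧸ Λ) → X)) (hν₃ : IsProdMeasure μ ν₃)
    (b₁ : ↥Γ → ((↥Γ ⧸ (Λ.subgroupOf Γ)) → X) → (↥Γ ⧸ (Λ.subgroupOf Γ)) → X)
    (hb₁ : CoindRel (Λ.subgroupOf Γ) ι₁
      (fun (g : ↥(Λ.subgroupOf Γ)) => a ⟨((g : ↥Γ) : Δ), Subgroup.mem_subgroupOf.mp g.2⟩) b₁)
    (b₂ : Δ → ((Δ ⧸ Γ) → (↥Γ ⧸ (Λ.subgroupOf Γ)) → X) →
      (Δ ⧸ Γ) → (↥Γ ⧸ (Λ.subgroupOf Γ)) → X)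
    (hb₂ : CoindRel Γ ι₂ b₁ b₂)
    (b₃ : Δ → ((Δ ⧸ Λ) → X) → (Δ ⧸ Λ) → X)
    (hb₃ : CoindRel Λ ι₃ a b₃) :
    ∃ (φ : ((Δ ⧸ Γ) → (↥Γ ⧸ (Λ.subgroupOf Γ)) → X) → (Δ ⧸ Λ) → X)
      (ψ : ((Δ ⧸ Λ) → X) → (Δ ⧸ Γ) → (↥Γ ⧸ (Λ.subgroupOf Γ)) → X),
      Measurable φ ∧ Measurable ψ ∧ Measure.map φ ν₂ = ν₃ ∧
      (∀ᵐ f ∂ν₂, ψ (φ f) = f) ∧ (∀ᵐ f ∂ν₃, φ (ψ f) = f) ∧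
      ∀ δ : Δ, ∀ᵐ f ∂ν₂, φ (b₂ δ f) = b₃ δ (φ f) := by
  classical
  obtain ⟨ham, hamap, ha1, hacomp⟩ := ha
  -- basic facts about the action `a`
  have ha_comp : ∀ (g h : ↥Λ) (x : X), a (g * h) x = a g (a h x) := by
    intro g h x; rw [hacomp g h]; rfl
  have ha_id : ∀ x : X, a 1 x = x := fun x => by rw [ha1]; rfl
  have ha_inv : ∀ (g : ↥Λ) (x : X), a g⁻¹ (a g x) = x := by
    intro g x; rw [← ha_comp, inv_mul_cancel, ha_id]
  have ha_inv' : ∀ (g : ↥Λ) (x : X), a g (a g⁻¹ x) = x := by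
    intro g x; rw [← ha_comp, mul_inv_cancel, ha_id]
  have ha_pre : ∀ (g : ↥Λ) (S : Set X), MeasurableSet S → μ (a g ⁻¹' S) = μ S := by
    intro g S hS
    conv_rhs => rw [← hamap g]
    rw [Measure.map_apply (ham g) hS]
  -- the projection Δ ⧸ Λ → Δ ⧸ Γ
  let cc : Δ ⧸ Λ → Δ ⧸ Γ := Subgroup.quotientMapOfLE hΛΓ
  have cc_mk : ∀ d : Δ, cc (QuotientGroup.mk d) = QuotientGroup.mk d := fun d => rfl
  have cc_smul : ∀ (g : Δ) (p : Δ ⧸ Λ), cc (g • p) = g • cc p := by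
    intro g p
    refine QuotientGroup.induction_on p fun d => ?_
    have h1 : g • (QuotientGroup.mk d : Δ ⧸ Λ) = QuotientGroup.mk (g * d) := by
      rw [MulAction.Quotient.smul_mk, smul_eq_mul]
    have h2 : g • (QuotientGroup.mk d : Δ ⧸ Γ) = QuotientGroup.mk (g * d) := by
      rw [MulAction.Quotient.smul_mk, smul_eq_mul]
    rw [h1, cc_mk, cc_mk, h2]
  -- the second component Δ ⧸ Λ → ↥Γ ⧸ Λ'
  have hee_mem : ∀ p : Δ ⧸ Λ, (ι₂ (cc p))⁻¹ * p.out ∈ Γ := by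
    intro p
    have h1 : (QuotientGroup.mk (ι₂ (cc p)) : Δ ⧸ Γ) = QuotientGroup.mk p.out :=
      (hι₂ (cc p)).trans (((cc_mk p.out).symm.trans
        (congrArg cc (QuotientGroup.out_eq' p))).symm)
    exact QuotientGroup.eq.mp h1
  let ee : Δ ⧸ Λ → ↥Γ ⧸ (Λ.subgroupOf Γ) := fun p =>
    QuotientGroup.mk ⟨(ι₂ (cc p))⁻¹ * p.out, hee_mem p⟩
  -- the inverse map
  let J : Δ ⧸ Γ → (↥Γ ⧸ (Λ.subgroupOf Γ)) → Δ ⧸ Λ := fun c e =>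
    QuotientGroup.mk (ι₂ c * ((ι₁ e : ↥Γ) : Δ))
  have hJcc : ∀ c e, cc (J c e) = c := by
    intro c e
    have h1 : cc (J c e) = QuotientGroup.mk (ι₂ c * ((ι₁ e : ↥Γ) : Δ)) := rfl
    rw [h1]
    refine Eq.trans ?_ (hι₂ c)
    refine QuotientGroup.eq.mpr ?_
    have h2 : (ι₂ c * ((ι₁ e : ↥Γ) : Δ))⁻¹ * ι₂ c = (((ι₁ e : ↥Γ) : Δ))⁻¹ := by group
    rw [h2]
    exact Γ.inv_mem (ι₁ e).2
  have hJp : ∀ p : Δ ⧸ Λ, J (cc p) (ee p) = p := by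
    intro p
    have h0 : ee p = QuotientGroup.mk (⟨(ι₂ (cc p))⁻¹ * p.out, hee_mem p⟩ : ↥Γ) := rfl
    have h1 := QuotientGroup.eq.mp ((hι₁ (ee p)).trans h0)
    rw [Subgroup.mem_subgroupOf] at h1
    have h2 : ((((ι₁ (ee p))⁻¹ * (⟨(ι₂ (cc p))⁻¹ * p.out, hee_mem p⟩ : ↥Γ)) : ↥Γ) : Δ)
        = ((ι₁ (ee p) : ↥Γ) : Δ)⁻¹ * ((ι₂ (cc p))⁻¹ * p.out) := rfl
    rw [h2] at h1
    refine Eq.trans ?_ (QuotientGroup.out_eq' p)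
    refine QuotientGroup.eq.mpr ?_
    have h3 : (ι₂ (cc p) * ((ι₁ (ee p) : ↥Γ) : Δ))⁻¹ * p.out
        = ((ι₁ (ee p) : ↥Γ) : Δ)⁻¹ * ((ι₂ (cc p))⁻¹ * p.out) := by group
    rw [h3]; exact h1
  have hJee : ∀ c e, ee (J c e) = e := by
    intro c e
    refine Eq.trans ?_ (hι₁ e)
    refine QuotientGroup.eq.mpr ?_
    rw [Subgroup.mem_subgroupOf]
    show ((ι₂ (cc (J c e)))⁻¹ * (J c e).out)⁻¹ * ((ι₁ e : ↥Γ) : Δ) ∈ Λ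
    rw [hJcc c e]
    have h2 : (ι₂ c * ((ι₁ e : ↥Γ) : Δ))⁻¹ * (J c e).out ∈ Λ :=
      QuotientGroup.eq.mp (QuotientGroup.out_eq' (J c e)).symm
    have h3 : ((ι₂ c)⁻¹ * (J c e).out)⁻¹ * ((ι₁ e : ↥Γ) : Δ)
        = ((ι₂ c * ((ι₁ e : ↥Γ) : Δ))⁻¹ * (J c e).out)⁻¹ := by group
    rw [h3]
    exact Λ.inv_mem h2
  -- the correcting cocycle
  have hτ_mem : ∀ p : Δ ⧸ Λ, (ι₃ p)⁻¹ * (ι₂ (cc p) * ((ι₁ (ee p) : ↥Γ) : Δ)) ∈ Λ := by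
    intro p
    have h0 : J (cc p) (ee p)
        = QuotientGroup.mk (ι₂ (cc p) * ((ι₁ (ee p) : ↥Γ) : Δ)) := rfl
    exact QuotientGroup.eq.mp ((hι₃ p).trans ((hJp p).symm.trans h0))
  let τ : Δ ⧸ Λ → ↥Λ := fun p => ⟨_, hτ_mem p⟩
  -- the isomorphisms
  let φ : ((Δ ⧸ Γ) → (↥Γ ⧸ (Λ.subgroupOf Γ)) → X) → (Δ ⧸ Λ) → X :=
    fun F p => a (τ p) (F (cc p) (ee p))
  let ψ : ((Δ ⧸ Λ) → X) → (Δ ⧸ Γ) → (↥Γ ⧸ (Λ.subgroupOf Γ)) → X :=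
    fun G c e => a (τ (J c e))⁻¹ (G (J c e))
  have hφm : Measurable φ := by
    refine measurable_pi_lambda _ fun p => ?_
    exact (ham (τ p)).comp ((measurable_pi_apply (ee p)).comp (measurable_pi_apply (cc p)))
  have hψm : Measurable ψ := by
    refine measurable_pi_lambda _ fun c => ?_
    refine measurable_pi_lambda _ fun e => ?_
    exact (ham _).comp (measurable_pi_apply (J c e))
  have hψφ : ∀ F, ψ (φ F) = F := by
    intro F; funext c e
    show a (τ (J c e))⁻¹ (a (τ (J c e)) (F (cc (J c e)) (ee (J c e)))) = F c e
    rw [hJcc c e, hJee c e, ha_inv]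
  have hφψ : ∀ G, φ (ψ G) = G := by
    intro G; funext p
    show a (τ p) (a (τ (J (cc p) (ee p)))⁻¹ (G (J (cc p) (ee p)))) = G p
    rw [hJp p, ha_inv']
  -- equivariance
  have hequiv : ∀ (δ : Δ) (F : (Δ ⧸ Γ) → (↥Γ ⧸ (Λ.subgroupOf Γ)) → X) (p : Δ ⧸ Λ),
      φ (b₂ δ F) p = b₃ δ (φ F) p := by
    intro δ F p
    let γ : ↥Γ := ⟨(ι₂ (cc p))⁻¹ * δ * ι₂ (δ⁻¹ • cc p), transversal_mem hι₂ (cc p) δ⟩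
    let lam0 : ↥(Λ.subgroupOf Γ) :=
      ⟨(ι₁ (ee p))⁻¹ * γ * ι₁ (γ⁻¹ • ee p), transversal_mem hι₁ (ee p) γ⟩
    let lamhat : ↥Λ := ⟨((lam0 : ↥Γ) : Δ), Subgroup.mem_subgroupOf.mp lam0.2⟩
    let lam2 : ↥Λ := ⟨(ι₃ p)⁻¹ * δ * ι₃ (δ⁻¹ • p), transversal_mem hι₃ p δ⟩
    have hb2 : b₂ δ F (cc p) = b₁ γ (F (δ⁻¹ • cc p)) := hb₂ δ F (cc p) γ rfl
    have hb1 : b₁ γ (F (δ⁻¹ • cc p)) (ee p)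
        = a lamhat (F (δ⁻¹ • cc p) (γ⁻¹ • ee p)) :=
      hb₁ γ (F (δ⁻¹ • cc p)) (ee p) lam0 rfl
    have hb3 : b₃ δ (φ F) p = a lam2 (φ F (δ⁻¹ • p)) := hb₃ δ (φ F) p lam2 rfl
    have heesmul : γ⁻¹ • ee p = ee (δ⁻¹ • p) := by
      have h0 : γ⁻¹ • ee p
          = QuotientGroup.mk (γ⁻¹ * ⟨(ι₂ (cc p))⁻¹ * p.out, hee_mem p⟩) := rfl
      have h1 : ee (δ⁻¹ • p)
          = QuotientGroup.mk (⟨(ι₂ (cc (δ⁻¹ • p)))⁻¹ * (δ⁻¹ • p).out,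
              hee_mem (δ⁻¹ • p)⟩ : ↥Γ) := rfl
      rw [h0, h1]
      refine QuotientGroup.eq.mpr ?_
      rw [Subgroup.mem_subgroupOf]
      show (((ι₂ (cc p))⁻¹ * δ * ι₂ (δ⁻¹ • cc p))⁻¹ * ((ι₂ (cc p))⁻¹ * p.out))⁻¹ *
          ((ι₂ (cc (δ⁻¹ • p)))⁻¹ * (δ⁻¹ • p).out) ∈ Λ
      rw [cc_smul δ⁻¹ p]
      have h2 : (((ι₂ (cc p))⁻¹ * δ * ι₂ (δ⁻¹ • cc p))⁻¹ * ((ι₂ (cc p))⁻¹ * p.out))⁻¹ *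
          ((ι₂ (δ⁻¹ • cc p))⁻¹ * (δ⁻¹ • p).out)
          = (δ⁻¹ * p.out)⁻¹ * (δ⁻¹ • p).out := by group
      rw [h2]
      exact out_rel δ⁻¹ p
    have hW : F (δ⁻¹ • cc p) (γ⁻¹ • ee p) = F (cc (δ⁻¹ • p)) (ee (δ⁻¹ • p)) := by
      rw [heesmul, cc_smul]
    have hkey : τ p * lamhat = lam2 * τ (δ⁻¹ • p) := by
      apply Subtype.ext
      show ((ι₃ p)⁻¹ * (ι₂ (cc p) * ((ι₁ (ee p) : ↥Γ) : Δ))) *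
          (((ι₁ (ee p) : ↥Γ) : Δ)⁻¹ * ((ι₂ (cc p))⁻¹ * δ * ι₂ (δ⁻¹ • cc p)) *
            ((ι₁ (γ⁻¹ • ee p) : ↥Γ) : Δ))
        = ((ι₃ p)⁻¹ * δ * ι₃ (δ⁻¹ • p)) *
          ((ι₃ (δ⁻¹ • p))⁻¹ * (ι₂ (cc (δ⁻¹ • p)) * ((ι₁ (ee (δ⁻¹ • p)) : ↥Γ) : Δ)))
      rw [heesmul, cc_smul]
      group
    calc φ (b₂ δ F) p = a (τ p) (b₂ δ F (cc p) (ee p)) := rfl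
      _ = a (τ p) (b₁ γ (F (δ⁻¹ • cc p)) (ee p)) := by rw [hb2]
      _ = a (τ p) (a lamhat (F (δ⁻¹ • cc p) (γ⁻¹ • ee p))) := by rw [hb1]
      _ = a (τ p * lamhat) (F (δ⁻¹ • cc p) (γ⁻¹ • ee p)) := (ha_comp _ _ _).symm
      _ = a (lam2 * τ (δ⁻¹ • p)) (F (cc (δ⁻¹ • p)) (ee (δ⁻¹ • p))) := by rw [hkey, hW]
      _ = a lam2 (a (τ (δ⁻¹ • p)) (F (cc (δ⁻¹ • p)) (ee (δ⁻¹ • p)))) := ha_comp _ _ _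
      _ = a lam2 (φ F (δ⁻¹ • p)) := rfl
      _ = b₃ δ (φ F) p := hb3.symm
  -- the measure computation
  have hcyl : ∀ (s : Finset (Δ ⧸ Λ)) (f : (Δ ⧸ Λ) → Set X), (∀ i, MeasurableSet (f i)) →
      ν₂ (φ ⁻¹' cylSet s f) = ∏ i ∈ s, μ (f i) := by
    intro s f hf
    set g : (Δ ⧸ Λ) → Set X := fun i => a (τ i) ⁻¹' f i with hg
    have hgm : ∀ i, MeasurableSet (g i) := fun i => (ham (τ i)) (hf i)
    have hgμ : ∀ i, μ (g i) = μ (f i) := fun i => ha_pre (τ i) (f i) (hf i)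
    set A : (Δ ⧸ Γ) → Set ((↥Γ ⧸ (Λ.subgroupOf Γ)) → X) :=
      fun c₀ => {h | ∀ i ∈ s, cc i = c₀ → h (ee i) ∈ g i} with hA
    have hAm : ∀ c₀, MeasurableSet (A c₀) := by
      intro c₀
      have h1 : A c₀ = ⋂ i ∈ (s : Set (Δ ⧸ Λ)), ⋂ (_ : cc i = c₀),
          (fun h : (↥Γ ⧸ (Λ.subgroupOf Γ)) → X => h (ee i)) ⁻¹' g i := by
        ext h; simp [hA]
      rw [h1]
      exact MeasurableSet.biInter s.countable_toSet fun i _ =>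
        MeasurableSet.iInter fun _ => (measurable_pi_apply (ee i)) (hgm i)
    have hpre : φ ⁻¹' cylSet s f = {F | ∀ c₀ ∈ s.image cc, F c₀ ∈ A c₀} := by
      ext F
      simp only [Set.mem_preimage, cylSet, Set.mem_setOf_eq, Finset.mem_image, hA]
      constructor
      · rintro h c₀ ⟨j, hj, rfl⟩ i hi hci
        rw [← hci]
        exact h i hi
      · intro h i hi
        exact h (cc i) ⟨i, hi, rfl⟩ i hi rfl
    have h2 : ν₂ {F | ∀ c₀ ∈ s.image cc, F c₀ ∈ A c₀} = ∏ c₀ ∈ s.image cc, ν₁ (A c₀) :=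
      hν₂.2 (s.image cc) A hAm
    have h3 : ∀ c₀ ∈ s.image cc,
        ν₁ (A c₀) = ∏ i ∈ s.filter (fun i => cc i = c₀), μ (g i) := by
      intro c₀ _
      have hJi : ∀ i ∈ s.filter (fun i => cc i = c₀), J c₀ (ee i) = i := by
        intro i hi
        rw [Finset.mem_filter] at hi
        rw [← hi.2]
        exact hJp i
      have hAB : A c₀ = {h | ∀ j ∈ (s.filter (fun i => cc i = c₀)).image ee,
          h j ∈ g (J c₀ j)} := by
        ext h
        simp only [hA, Set.mem_setOf_eq, Finset.mem_image, Finset.mem_filter]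
        constructor
        · rintro hh j ⟨i, hi, rfl⟩
          rw [hJi i (Finset.mem_filter.mpr hi)]
          exact hh i hi.1 hi.2
        · intro hh i hi hci
          have h4 := hh (ee i) ⟨i, ⟨hi, hci⟩, rfl⟩
          rwa [hJi i (Finset.mem_filter.mpr ⟨hi, hci⟩)] at h4
      rw [hAB, hν₁.2 _ _ (fun j => hgm (J c₀ j))]
      rw [Finset.prod_image (fun i hi i' hi' hee' => by
        rw [← hJi i hi, ← hJi i' hi', hee'])]
      refine Finset.prod_congr rfl fun i hi => ?_
      rw [hJi i hi]
    calc ν₂ (φ ⁻¹' cylSet s f) = ∏ c₀ ∈ s.image cc, ν₁ (A c₀) := by rw [hpre]; exact h2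
      _ = ∏ c₀ ∈ s.image cc, ∏ i ∈ s.filter (fun i => cc i = c₀), μ (g i) :=
          Finset.prod_congr rfl h3
      _ = ∏ i ∈ s, μ (g i) :=
          Finset.prod_fiberwise_of_maps_to (fun i hi => Finset.mem_image_of_mem cc hi) _
      _ = ∏ i ∈ s, μ (f i) := Finset.prod_congr rfl fun i _ => hgμ i
  have hmap : Measure.map φ ν₂ = ν₃ := by
    haveI := hν₂.1
    haveI := hν₃.1
    haveI : IsProbabilityMeasure (Measure.map φ ν₂) :=
      Measure.isProbabilityMeasure_map hφm.aemeasurable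
    refine prob_ext_of_cyl _ _ fun s f hf => ?_
    rw [Measure.map_apply hφm (measurableSet_cylSet s f hf), hcyl s f hf]
    exact (hν₃.2 s f hf).symm
  exact ⟨φ, ψ, hφm, hψm, hmap,
    Filter.Eventually.of_forall fun F => hψφ F,
    Filter.Eventually.of_forall fun G => hφψ G,
    fun δ => Filter.Eventually.of_forall fun F => funext fun p => hequiv δ F p⟩

end IRSPaper
end

section
/- Let Δ be a countable discrete group containing ℤ as a subgroup with [Δ : ℤ] = ∞. Then every invariant random subgroup θ of ℤ satisfies CIND_ℤ^Δ(θ) = δ_{core_Δ(ker(θ))}, the Dirac measure at the subgroup core_Δ(ker(θ)). -/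
open MeasureTheory

namespace IRSPaper


/-! ## Auxiliary lemmas -/

open scoped ENNReal

section Aux

open Filter

variable {Δ : Type*} [Group Δ]

lemma isOpen_nsetx {G : Type*} [Group G] (x : G) : IsOpen {H : Subgroup G | x ∈ H} := by
  have h : {H : Subgroup G | x ∈ H}
      = (fun (H : Subgroup G) (g : G) => @decide (g ∈ H) (Classical.dec _)) ⁻¹'
        ((fun b : G → Bool => b x) ⁻¹' {true}) := by
    ext H
    simp [decide_eq_true_eq]
  rw [h]
  exact isOpen_induced ((continuous_apply x).isOpen_preimage _ (isOpen_discrete _))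

lemma measurableSet_nsetx {G : Type*} [Group G] (x : G) :
    MeasurableSet {H : Subgroup G | x ∈ H} :=
  (isOpen_nsetx x).measurableSet

lemma meas_inter_eq_one {α : Type*} [MeasurableSpace α] (μ : Measure α)
    (hμ : μ Set.univ = 1) {A B : Set α} (hAm : MeasurableSet A) (hBm : MeasurableSet B)
    (hA : μ A = 1) (hB : μ B = 1) : μ (A ∩ B) = 1 := by
  have hAc : μ Aᶜ = 0 := by
    rw [measure_compl hAm (by rw [hA]; exact ENNReal.one_ne_top), hμ, hA, tsub_self]
  have hBc : μ Bᶜ = 0 := by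
    rw [measure_compl hBm (by rw [hB]; exact ENNReal.one_ne_top), hμ, hB, tsub_self]
  have h1 : μ ((A ∩ B)ᶜ) = 0 := by
    rw [Set.compl_inter]
    refine le_antisymm ?_ zero_le
    calc μ (Aᶜ ∪ Bᶜ) ≤ μ Aᶜ + μ Bᶜ := measure_union_le _ _
    _ = 0 := by rw [hAc, hBc, add_zero]
  have h2 : (1 : ℝ≥0∞) ≤ μ (A ∩ B) := by
    calc (1 : ℝ≥0∞) = μ Set.univ := hμ.symm
    _ = μ ((A ∩ B) ∪ (A ∩ B)ᶜ) := by rw [Set.union_compl_self]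
    _ ≤ μ (A ∩ B) + μ (A ∩ B)ᶜ := measure_union_le _ _
    _ = μ (A ∩ B) := by rw [h1, add_zero]
  exact le_antisymm ((measure_mono (Set.subset_univ _)).trans hμ.le) h2

lemma mem_normalCore_iff {H : Subgroup Δ} {x : Δ} :
    x ∈ H.normalCore ↔ ∀ b : Δ, b * x * b⁻¹ ∈ H := Iff.rfl

lemma exp_subgroup (z : Δ) (C : Subgroup Δ) : ∃ m : ℤ, ∀ n : ℤ, z ^ n ∈ C ↔ m ∣ n := by
  let S : AddSubgroup ℤ :=
    { carrier := {n : ℤ | z ^ n ∈ C}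
      zero_mem' := by rw [Set.mem_setOf_eq, zpow_zero]; exact C.one_mem
      add_mem' := by
        intro a b ha hb
        have := C.mul_mem ha hb
        simpa [zpow_add] using this
      neg_mem' := by
        intro a ha
        rw [Set.mem_setOf_eq, zpow_neg]
        exact C.inv_mem ha }
  obtain ⟨m, hm⟩ := Int.subgroup_cyclic S
  refine ⟨m, fun n => ?_⟩
  have h1 : (z ^ n ∈ C) ↔ n ∈ S := Iff.rfl
  rw [h1, hm, ← AddSubgroup.zmultiples_eq_closure, Int.mem_zmultiples_iff]

lemma conj_eq_self_or_inv {z : Δ} (hz : ¬ IsOfFinOrder z) {γ : Δ}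
    (hγ : γ ∈ (Subgroup.zpowers z).normalCore) (δ : Δ) :
    δ * γ * δ⁻¹ = γ ∨ δ * γ * δ⁻¹ = γ⁻¹ := by
  have hinj : Function.Injective fun n : ℤ => z ^ n :=
    injective_zpow_iff_not_isOfFinOrder.2 hz
  by_cases hγ1 : γ = 1
  · left; simp [hγ1]
  have hCle : (Subgroup.zpowers z).normalCore ≤ Subgroup.zpowers z :=
    Subgroup.normalCore_le _
  have hNorm : ((Subgroup.zpowers z).normalCore).Normal := Subgroup.normalCore_normal _
  obtain ⟨m, hmem⟩ := exp_subgroup z (Subgroup.zpowers z).normalCore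
  obtain ⟨a, ha⟩ := Subgroup.mem_zpowers_iff.1 (hCle hγ)
  have haC : z ^ a ∈ (Subgroup.zpowers z).normalCore := by rw [ha]; exact hγ
  obtain ⟨k, hk⟩ := (hmem a).1 haC
  have ha0 : a ≠ 0 := fun h => hγ1 (by rw [← ha, h, zpow_zero])
  have hm0 : m ≠ 0 := fun h => ha0 (by rw [hk, h, zero_mul])
  have hzmC : z ^ m ∈ (Subgroup.zpowers z).normalCore := (hmem m).2 dvd_rfl
  have h1 : δ * z ^ m * δ⁻¹ ∈ (Subgroup.zpowers z).normalCore := hNorm.conj_mem _ hzmC δ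
  obtain ⟨b, hb⟩ := Subgroup.mem_zpowers_iff.1 (hCle h1)
  have hbC : z ^ b ∈ (Subgroup.zpowers z).normalCore := by rw [hb]; exact h1
  obtain ⟨u, hu⟩ := (hmem b).1 hbC
  have h2 : δ⁻¹ * z ^ m * (δ⁻¹)⁻¹ ∈ (Subgroup.zpowers z).normalCore := hNorm.conj_mem _ hzmC δ⁻¹
  obtain ⟨cc, hcc⟩ := Subgroup.mem_zpowers_iff.1 (hCle h2)
  have hccC : z ^ cc ∈ (Subgroup.zpowers z).normalCore := by rw [hcc]; exact h2
  obtain ⟨v, hv⟩ := (hmem cc).1 hccC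
  have key : δ * z ^ (m * v) * δ⁻¹ = z ^ m := by
    have hzv : z ^ (m * v) = δ⁻¹ * z ^ m * δ := by
      rw [← hv, hcc, inv_inv]
    rw [hzv]
    group
  have hbval : z ^ (m * u) = δ * z ^ m * δ⁻¹ := by rw [← hu, hb]
  have huv : u * v = 1 := by
    have e1 : z ^ (m * (u * v)) = z ^ m := by
      calc z ^ (m * (u * v)) = (z ^ (m * u)) ^ v := by
            rw [← zpow_mul]; ring_nf
      _ = (δ * z ^ m * δ⁻¹) ^ v := by rw [hbval]
      _ = δ * z ^ (m * v) * δ⁻¹ := by rw [conj_zpow, ← zpow_mul]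
      _ = z ^ m := key
    have e2 : m * (u * v) = m := hinj e1
    have e3 : m * (u * v) = m * 1 := by rw [mul_one]; exact e2
    exact mul_left_cancel₀ hm0 e3
  have main : δ * γ * δ⁻¹ = γ ^ u := by
    rw [← ha, hk]
    calc δ * z ^ (m * k) * δ⁻¹ = (δ * z ^ m * δ⁻¹) ^ k := by rw [conj_zpow, ← zpow_mul]
    _ = (z ^ (m * u)) ^ k := by rw [hbval]
    _ = (z ^ (m * k)) ^ u := by rw [← zpow_mul, ← zpow_mul]; ring_nf
  rcases Int.isUnit_iff.1 (IsUnit.of_mul_eq_one (a := u) v huv) with h | h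
  · left; rw [main, h, zpow_one]
  · right; rw [main, h, zpow_neg, zpow_one]

lemma transversal_infinite {Γ : Subgroup Δ} (hQ : Infinite (Δ ⧸ Γ)) {T : Set Δ}
    (hT : IsLeftTransversal Γ T) : Infinite T := by
  have hsurj : Function.Surjective (fun t : T => (QuotientGroup.mk (t : Δ) : Δ ⧸ Γ)) := by
    intro q
    induction q using QuotientGroup.induction_on with
    | _ d =>
      obtain ⟨t, ⟨htT, htd⟩, _⟩ := hT d
      exact ⟨⟨t, htT⟩, (QuotientGroup.eq.2 htd).symm⟩
  exact Infinite.of_surjective _ hsurj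

lemma tprod_const_zero {ι : Type*} [Infinite ι] {c : ℝ≥0∞} (hc : c < 1) :
    ∏' _ : ι, c = 0 := by
  have hcard : Tendsto (Finset.card : Finset ι → ℕ) atTop atTop := by
    apply tendsto_atTop_atTop.2
    intro n
    obtain ⟨F, hF⟩ : ∃ F : Finset ι, F.card = n :=
      ⟨(Finset.range n).map (Infinite.natEmbedding ι), by simp⟩
    exact ⟨F, fun G hG => hF ▸ Finset.card_le_card hG⟩
  have h : HasProd (fun _ : ι => c) 0 := by
    show Tendsto (fun s : Finset ι => ∏ _ ∈ s, c) atTop (nhds 0)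
    have hcomp := (ENNReal.tendsto_pow_atTop_nhds_zero_of_lt_one hc).comp hcard
    refine Filter.Tendsto.congr (fun s => ?_) hcomp
    simp [Function.comp, Finset.prod_const]
  exact h.tprod_eq

lemma npullSet_singleton {Γ : Subgroup Δ} {w : Δ} (hw : w ∈ Γ) :
    NpullSet Γ {w} = {Λ : Subgroup ↥Γ | (⟨w, hw⟩ : ↥Γ) ∈ Λ} := by
  ext Λ
  constructor
  · intro h
    exact h ⟨w, hw⟩ rfl
  · intro h x hx
    have hxw : x = ⟨w, hw⟩ := Subtype.ext hx
    rwa [hxw]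

/-- The kernel of a probability IRS, as an honest subgroup. -/
def kerSubgroup (Γ : Subgroup Δ) (θ : Measure (Subgroup ↥Γ))
    (hθ : IsProbabilityMeasure θ) : Subgroup ↥Γ where
  carrier := {x : ↥Γ | θ {Λ : Subgroup ↥Γ | x ∈ Λ} = 1}
  one_mem' := by
    have h : {Λ : Subgroup ↥Γ | (1 : ↥Γ) ∈ Λ} = Set.univ := by
      ext Λ; simpa using Λ.one_mem
    rw [Set.mem_setOf_eq, h]
    exact measure_univ
  inv_mem' := by
    intro x hx
    have h : {Λ : Subgroup ↥Γ | x⁻¹ ∈ Λ} = {Λ : Subgroup ↥Γ | x ∈ Λ} := by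
      ext Λ; simp [inv_mem_iff]
    rw [Set.mem_setOf_eq, h]
    exact hx
  mul_mem' := by
    intro x y hx hy
    have hsub : {Λ : Subgroup ↥Γ | x ∈ Λ} ∩ {Λ : Subgroup ↥Γ | y ∈ Λ}
        ⊆ {Λ : Subgroup ↥Γ | x * y ∈ Λ} := fun Λ hΛ => Λ.mul_mem hΛ.1 hΛ.2
    have h1 := meas_inter_eq_one θ measure_univ (measurableSet_nsetx x) (measurableSet_nsetx y) hx hy
    exact le_antisymm prob_le_one (h1 ▸ measure_mono hsub)

lemma mem_kerSubgroup_iff {Γ : Subgroup Δ} {θ : Measure (Subgroup ↥Γ)}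
    {hθ : IsProbabilityMeasure θ} {x : ↥Γ} :
    x ∈ kerSubgroup Γ θ hθ ↔ θ {Λ : Subgroup ↥Γ | x ∈ Λ} = 1 := Iff.rfl

lemma kerIRS_eq (Γ : Subgroup Δ) (θ : Measure (Subgroup ↥Γ))
    (hθ : IsProbabilityMeasure θ) : kerIRS Γ θ = kerSubgroup Γ θ hθ := by
  have h : {x : ↥Γ | θ {Λ : Subgroup ↥Γ | x ∈ Λ} = 1} = ↑(kerSubgroup Γ θ hθ) := rfl
  unfold kerIRS
  rw [h, Subgroup.closure_eq]

end Aux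

/-- **Proposition 7.5.** If `ℤ ≤ Δ` (an infinite cyclic subgroup, generated by an element `z`
of infinite order) has infinite index in `Δ`, then for every IRS `θ` of `ℤ` the co-induced
IRS `CIND_ℤ^Δ(θ)` is the Dirac measure at `core_Δ(ker(θ))`. -/
theorem coinduction_from_Z_dirac {Δ : Type*} [Group Δ] [Countable Δ]
    (z : Δ) (hz : ¬ IsOfFinOrder z)
    (hinf : Infinite (Δ ⧸ Subgroup.zpowers z))
    (θ : Measure (Subgroup ↥(Subgroup.zpowers z))) (hθ : IsIRS θ)
    (T : Set Δ) (hT : IsLeftTransversal (Subgroup.zpowers z) T)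
    (ν : Measure (Subgroup Δ)) (hν : IsIRS ν)
    (hc : CindSpec (Subgroup.zpowers z) T θ ν) :
    ν = Measure.dirac (coreKer (Subgroup.zpowers z) θ) := by
  classical
  haveI hθP : IsProbabilityMeasure θ := hθ.1
  haveI hνP : IsProbabilityMeasure ν := hν.1
  haveI hTinf : Infinite T := transversal_infinite hinf hT
  set Kθ : Subgroup ↥(Subgroup.zpowers z) := kerSubgroup (Subgroup.zpowers z) θ hθP with hKθdef
  set K : Subgroup Δ := coreKer (Subgroup.zpowers z) θ with hKdef
  have hKeq : K = (Subgroup.map (Subgroup.zpowers z).subtype Kθ).normalCore := by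
    rw [hKdef, coreKer, kerIRS_eq (Subgroup.zpowers z) θ hθP]
  haveI hKnormal : K.Normal := by
    rw [hKeq]; infer_instance
  have hKleΓ : K ≤ (Subgroup.zpowers z) := by
    rw [hKeq]
    exact (Subgroup.normalCore_le _).trans (Subgroup.map_subtype_le _)
  -- Step 1: the value of ν on each basic set N_γ
  have key : ∀ γ : Δ, ν {H : Subgroup Δ | γ ∈ H} = if γ ∈ K then 1 else 0 := by
    intro γ
    have hNset : (NSet ((({γ} : Finset Δ) : Set Δ))) = {H : Subgroup Δ | γ ∈ H} := by
      ext H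
      simp [NSet, Set.singleton_subset_iff]
    by_cases hγC : γ ∈ (Subgroup.zpowers z).normalCore
    · -- γ lies in the normal core of (Subgroup.zpowers z)
      have hγΓ : γ ∈ (Subgroup.zpowers z) := Subgroup.normalCore_le _ hγC
      have hprod := (hc {γ}).2 (by simpa using hγC)
      set g : ↥(Subgroup.zpowers z) := ⟨γ, hγΓ⟩ with hgdef
      set c : ℝ≥0∞ := θ {Λ : Subgroup ↥(Subgroup.zpowers z) | g ∈ Λ} with hcdef
      have hfac : ∀ t : T,
          θ (NpullSet (Subgroup.zpowers z) ((fun d => (t : Δ)⁻¹ * d * (t : Δ)) '' ((({γ} : Finset Δ) : Set Δ))))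
            = c := by
        intro t
        have himg : ((fun d => (t : Δ)⁻¹ * d * (t : Δ)) '' ((({γ} : Finset Δ) : Set Δ)))
            = {(t : Δ)⁻¹ * γ * (t : Δ)} := by
          simp
        have hconj : (t : Δ)⁻¹ * γ * (t : Δ) = γ ∨ (t : Δ)⁻¹ * γ * (t : Δ) = γ⁻¹ := by
          have := conj_eq_self_or_inv hz hγC (t : Δ)⁻¹
          rwa [inv_inv] at this
        rw [himg]
        rcases hconj with hcase | hcase
        · rw [hcase, npullSet_singleton hγΓ, hcdef]
        · rw [hcase, npullSet_singleton (inv_mem hγΓ)]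
          have hset : {Λ : Subgroup ↥(Subgroup.zpowers z) | (⟨γ⁻¹, inv_mem hγΓ⟩ : ↥(Subgroup.zpowers z)) ∈ Λ}
              = {Λ : Subgroup ↥(Subgroup.zpowers z) | g ∈ Λ} := by
            ext Λ
            have he : (⟨γ⁻¹, inv_mem hγΓ⟩ : ↥(Subgroup.zpowers z)) = g⁻¹ := rfl
            rw [Set.mem_setOf_eq, Set.mem_setOf_eq, he, inv_mem_iff]
          rw [hset, hcdef]
      have hν1 : ν {H : Subgroup Δ | γ ∈ H} = ∏' _ : T, c := by
        rw [← hNset, hprod]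
        exact tprod_congr hfac
      by_cases hc1 : c = 1
      · -- all factors are 1; γ belongs to K
        have hgK : g ∈ Kθ := hc1
        have hγK : γ ∈ K := by
          rw [hKeq, mem_normalCore_iff]
          intro b
          rcases conj_eq_self_or_inv hz hγC b with h | h <;> rw [h]
          · exact ⟨g, hgK, rfl⟩
          · exact inv_mem ⟨g, hgK, rfl⟩
        rw [hν1, if_pos hγK, hc1, tprod_one]
      · -- some factor is < 1; the infinite product vanishes and γ ∉ K
        have hclt : c < 1 := lt_of_le_of_ne prob_le_one hc1
        have hγK : γ ∉ K := by
          intro hmem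
          apply hc1
          have h2 : γ ∈ Subgroup.map (Subgroup.zpowers z).subtype Kθ := by
            rw [hKeq] at hmem
            exact Subgroup.normalCore_le _ hmem
          obtain ⟨x, hx, hxe⟩ := Subgroup.mem_map.1 h2
          have hxg : x = g := Subtype.ext hxe
          rw [hxg] at hx
          exact hx
        rw [hν1, if_neg hγK]
        exact tprod_const_zero hclt
    · -- γ is not in the normal core of (Subgroup.zpowers z)
      have h0 := (hc {γ}).1 (by simpa using hγC)
      have hγK : γ ∉ K := by
        intro hmem
        exact hγC ((Subgroup.normal_le_normalCore.2 hKleΓ) hmem)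
      rw [if_neg hγK, ← hNset]
      exact h0
  -- Step 2: ν is the Dirac measure at K
  set B : Δ → Set (Subgroup Δ) := fun γ =>
    if γ ∈ K then {H : Subgroup Δ | γ ∈ H} else {H : Subgroup Δ | γ ∈ H}ᶜ with hBdef
  have hB1 : ∀ γ : Δ, ν (B γ)ᶜ = 0 := by
    intro γ
    by_cases h : γ ∈ K
    · have h1 : ν {H : Subgroup Δ | γ ∈ H} = 1 := by rw [key γ, if_pos h]
      rw [hBdef]
      simp only [if_pos h]
      rw [measure_compl (measurableSet_nsetx γ) (by rw [h1]; exact ENNReal.one_ne_top),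
        h1, measure_univ, tsub_self]
    · rw [hBdef]
      simp only [if_neg h, compl_compl]
      rw [key γ, if_neg h]
  have hAc : ν (⋂ γ : Δ, B γ)ᶜ = 0 := by
    rw [Set.compl_iInter]
    exact measure_iUnion_null fun γ => hB1 γ
  have hA1 : (1 : ℝ≥0∞) ≤ ν (⋂ γ : Δ, B γ) := by
    calc (1 : ℝ≥0∞) = ν Set.univ := measure_univ.symm
    _ = ν ((⋂ γ : Δ, B γ) ∪ (⋂ γ : Δ, B γ)ᶜ) := by rw [Set.union_compl_self]
    _ ≤ ν (⋂ γ : Δ, B γ) + ν (⋂ γ : Δ, B γ)ᶜ := measure_union_le _ _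
    _ = ν (⋂ γ : Δ, B γ) := by rw [hAc, add_zero]
  have hAsub : (⋂ γ : Δ, B γ) ⊆ {K} := by
    intro H hH
    have hHK : H = K := by
      ext x
      have hx := Set.mem_iInter.1 hH x
      by_cases h : x ∈ K
      · rw [hBdef] at hx
        simp only [if_pos h] at hx
        exact ⟨fun _ => h, fun _ => hx⟩
      · rw [hBdef] at hx
        simp only [if_neg h, Set.mem_compl_iff, Set.mem_setOf_eq] at hx
        exact ⟨fun hxH => absurd hxH hx, fun hk => absurd hk h⟩
    simp [hHK]
  refine Measure.ext fun s hs => ?_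
  rw [Measure.dirac_apply' _ hs]
  by_cases hKs : K ∈ s
  · have h1 : (1 : ℝ≥0∞) ≤ ν s :=
      le_trans hA1 (measure_mono (hAsub.trans (Set.singleton_subset_iff.2 hKs)))
    rw [Set.indicator_of_mem hKs]
    exact le_antisymm prob_le_one h1
  · have hsub : s ⊆ (⋂ γ : Δ, B γ)ᶜ := by
      intro H hH hA
      have hHK : H = K := hAsub hA
      exact hKs (hHK ▸ hH)
    rw [Set.indicator_of_notMem hKs]
    exact le_antisymm ((measure_mono hsub).trans hAc.le) zero_le

end IRSPaper
end

section
/- Let Δ, Γ be countable discrete groups and φ : Δ → Γ a surjective group homomorphism. Let Φ : Sub(Γ) → Sub(Δ) be given by Φ(Λ) = φ⁻¹(Λ) and define Ψ : IRS(Γ) → IRS(Δ) by Ψ(θ) = Φ_*θ. Then Ψ is a well-defined, continuous, injective map, and for every θ ∈ IRS(Γ): if θ is ergodic then Ψ(θ) is ergodic; if θ is weakly mixing then Ψ(θ) is weakly mixing; and if θ is non-atomic then Ψ(θ) is non-atomic. -/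
open MeasureTheory

namespace IRSPaper


/-! ## The space `IRS(G)` with the weak* topology -/

/-- The space `IRS(G)` of invariant random subgroups of `G`, as a subspace of the space of
Borel probability measures on `Sub(G)` with the topology of weak convergence. -/
def IRSSpace (G : Type*) [Group G] : Type _ :=
  {θ : ProbabilityMeasure (Subgroup G) //
    ∀ g : G, Measure.map (conjSub g) (θ : Measure (Subgroup G)) = (θ : Measure (Subgroup G))}

noncomputable instance instTopIRSSpace (G : Type*) [Group G] :
    TopologicalSpace (IRSSpace G) :=
  instTopologicalSpaceSubtype

/-! ## Auxiliary lemmas -/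

section Aux

set_option linter.unusedSectionVars false

variable {G : Type*} [Group G]

/-- The embedding of `Sub(G)` into `2^G`. -/
noncomputable def embSub (G : Type*) [Group G] : Subgroup G → (G → Bool) :=
  fun H g => @decide (g ∈ H) (Classical.dec _)

lemma embSub_injective : Function.Injective (embSub G) := by
  intro H K h
  ext g
  have := congrFun h g
  simpa only [embSub, decide_eq_decide] using this

lemma isEmbedding_embSub : Topology.IsEmbedding (embSub G) :=
  ⟨⟨rfl⟩, embSub_injective⟩

noncomputable instance instT2Sub (G : Type*) [Group G] : T2Space (Subgroup G) :=
  isEmbedding_embSub.t2Space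

lemma isClosed_eval (g : G) (b : Bool) : IsClosed {f : G → Bool | f g = b} := by
  have h : {f : G → Bool | f g = b} = (fun f : G → Bool => f g) ⁻¹' {b} := rfl
  rw [h]
  exact (isClosed_discrete ({b} : Set Bool)).preimage (continuous_apply g)

lemma isOpen_eval (g : G) (b : Bool) : IsOpen {f : G → Bool | f g = b} := by
  have h : {f : G → Bool | f g = b} = (fun f : G → Bool => f g) ⁻¹' {b} := rfl
  rw [h]
  exact (isOpen_discrete ({b} : Set Bool)).preimage (continuous_apply g)

lemma range_embSub : Set.range (embSub G) =
    {f : G → Bool | f 1 = true ∧ (∀ a b, f a = true → f b = true → f (a * b) = true)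
      ∧ ∀ a, f a = true → f a⁻¹ = true} := by
  ext f
  constructor
  · rintro ⟨H, rfl⟩
    refine ⟨?_, ?_, ?_⟩ <;> simp only [embSub, decide_eq_true_eq]
    · exact H.one_mem
    · exact fun a b ha hb => H.mul_mem ha hb
    · exact fun a ha => H.inv_mem ha
  · rintro ⟨h1, h2, h3⟩
    set H : Subgroup G :=
      { carrier := {g | f g = true},
        one_mem' := h1,
        mul_mem' := fun ha hb => h2 _ _ ha hb,
        inv_mem' := fun ha => h3 _ ha } with hH
    have hmem : ∀ g : G, g ∈ H ↔ f g = true := fun _ => Iff.rfl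
    refine ⟨H, ?_⟩
    funext g
    simp only [embSub]
    cases hfg : f g
    · exact @decide_eq_false (g ∈ H) (Classical.dec _)
        (fun h => Bool.noConfusion (hfg ▸ (hmem g).mp h))
    · exact @decide_eq_true (g ∈ H) (Classical.dec _) ((hmem g).mpr hfg)

lemma isClosed_range_embSub : IsClosed (Set.range (embSub G)) := by
  rw [range_embSub]
  rw [show {f : G → Bool | f 1 = true ∧ (∀ a b, f a = true → f b = true → f (a * b) = true)
      ∧ ∀ a, f a = true → f a⁻¹ = true} =
      {f : G → Bool | f 1 = true} ∩
      ({f : G → Bool | ∀ a b, f a = true → f b = true → f (a * b) = true} ∩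
        {f : G → Bool | ∀ a, f a = true → f a⁻¹ = true}) from rfl]
  refine (isClosed_eval 1 true).inter (IsClosed.inter ?_ ?_)
  · have : {f : G → Bool | ∀ a b, f a = true → f b = true → f (a * b) = true}
        = ⋂ a, ⋂ b, ({f : G → Bool | f a = true}ᶜ ∪
            ({f : G → Bool | f b = true}ᶜ ∪ {f : G → Bool | f (a * b) = true})) := by
      ext f
      simp only [Set.mem_iInter, Set.mem_union, Set.mem_compl_iff, Set.mem_setOf_eq]
      constructor
      · intro h a b
        by_cases ha : f a = true
        · by_cases hb : f b = true
          · exact Or.inr (Or.inr (h a b ha hb))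
          · exact Or.inr (Or.inl hb)
        · exact Or.inl ha
      · intro h a b ha hb
        rcases h a b with h' | h' | h'
        · exact absurd ha h'
        · exact absurd hb h'
        · exact h'
    rw [this]
    exact isClosed_iInter fun a => isClosed_iInter fun b =>
      ((isClosed_compl_iff.mpr (isOpen_eval a true)).union
        ((isClosed_compl_iff.mpr (isOpen_eval b true)).union (isClosed_eval _ true)))
  · have : {f : G → Bool | ∀ a, f a = true → f a⁻¹ = true}
        = ⋂ a, ({f : G → Bool | f a = true}ᶜ ∪ {f : G → Bool | f a⁻¹ = true}) := by
      ext f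
      simp only [Set.mem_iInter, Set.mem_union, Set.mem_compl_iff, Set.mem_setOf_eq]
      constructor
      · intro h a
        by_cases ha : f a = true
        · exact Or.inr (h a ha)
        · exact Or.inl ha
      · intro h a ha
        rcases h a with h' | h'
        · exact absurd ha h'
        · exact h'
    rw [this]
    exact isClosed_iInter fun a =>
      ((isClosed_compl_iff.mpr (isOpen_eval a true)).union (isClosed_eval _ true))

lemma isClosedEmbedding_embSub : Topology.IsClosedEmbedding (embSub G) :=
  ⟨isEmbedding_embSub, isClosed_range_embSub⟩

noncomputable instance instCompactSub (G : Type*) [Group G] : CompactSpace (Subgroup G) :=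
  isClosedEmbedding_embSub.compactSpace

lemma continuous_comapSub {A B : Type*} [Group A] [Group B] (ψ : A →* B) :
    Continuous (fun Λ : Subgroup B => Subgroup.comap ψ Λ) := by
  apply continuous_induced_rng.mpr
  apply continuous_pi
  intro a
  show Continuous fun Λ : Subgroup B => @decide (a ∈ Subgroup.comap ψ Λ) (Classical.dec _)
  have : (fun Λ : Subgroup B => @decide (a ∈ Subgroup.comap ψ Λ) (Classical.dec _))
      = fun Λ : Subgroup B => embSub B Λ (ψ a) := by
    funext Λ
    exact decide_eq_decide.mpr Subgroup.mem_comap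
  rw [this]
  exact (continuous_apply (ψ a)).comp isEmbedding_embSub.continuous

lemma mem_conjSub {g x : G} {H : Subgroup G} : x ∈ conjSub g H ↔ g⁻¹ * x * g ∈ H := by
  simp only [conjSub, Subgroup.mem_map, MulEquiv.coe_toMonoidHom, MulAut.conj_apply]
  constructor
  · rintro ⟨y, hy, rfl⟩
    have : g⁻¹ * (g * y * g⁻¹) * g = y := by group
    rwa [this]
  · intro h
    exact ⟨g⁻¹ * x * g, h, by group⟩

lemma conjSub_eq_comap (g : G) (H : Subgroup G) :
    conjSub g H = Subgroup.comap (MulAut.conj g⁻¹).toMonoidHom H := by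
  ext x
  rw [mem_conjSub, Subgroup.mem_comap]
  simp [MulAut.conj_apply]

lemma continuous_conjSub (g : G) : Continuous (conjSub g : Subgroup G → Subgroup G) := by
  have h := continuous_comapSub (MulAut.conj g⁻¹).toMonoidHom
  simp only [← conjSub_eq_comap] at h
  exact h

lemma comap_conjSub {Δ Γ : Type*} [Group Δ] [Group Γ] (φ : Δ →* Γ) (d : Δ) (Λ : Subgroup Γ) :
    Subgroup.comap φ (conjSub (φ d) Λ) = conjSub d (Subgroup.comap φ Λ) := by
  ext x
  simp [mem_conjSub, Subgroup.mem_comap]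

end Aux

/-- **Proposition 8.21.** A surjective homomorphism `φ : Δ → Γ` induces, via
`Λ ↦ φ⁻¹(Λ)`, a (well-defined) continuous injective map `Ψ : IRS(Γ) → IRS(Δ)` that
preserves ergodicity, weak mixing and non-atomicity. -/
theorem epimorphism_embeds_IRS {Δ Γ : Type*} [Group Δ] [Group Γ]
    [Countable Δ] [Countable Γ]
    (φ : Δ →* Γ) (hφ : Function.Surjective φ) :
    ∃ Ψ : IRSSpace Γ → IRSSpace Δ,
      (∀ θ : IRSSpace Γ,
        ((Ψ θ).1 : Measure (Subgroup Δ)) =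
          Measure.map (fun Λ : Subgroup Γ => Subgroup.comap φ Λ)
            (θ.1 : Measure (Subgroup Γ))) ∧
      Continuous Ψ ∧ Function.Injective Ψ ∧
      ∀ θ : IRSSpace Γ,
        (ErgodicAct (fun (g : Γ) (Λ : Subgroup Γ) => conjSub g Λ)
            (θ.1 : Measure (Subgroup Γ)) →
          ErgodicAct (fun (d : Δ) (Λ : Subgroup Δ) => conjSub d Λ)
            ((Ψ θ).1 : Measure (Subgroup Δ))) ∧
        (WeaklyMixingAct (fun (g : Γ) (Λ : Subgroup Γ) => conjSub g Λ)
            (θ.1 : Measure (Subgroup Γ)) →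
          WeaklyMixingAct (fun (d : Δ) (Λ : Subgroup Δ) => conjSub d Λ)
            ((Ψ θ).1 : Measure (Subgroup Δ))) ∧
        (NonAtomicMeasure (θ.1 : Measure (Subgroup Γ)) →
          NonAtomicMeasure ((Ψ θ).1 : Measure (Subgroup Δ))) := by
  classical
  set Φ : Subgroup Γ → Subgroup Δ := fun Λ => Subgroup.comap φ Λ with hΦdef
  have hΦc : Continuous Φ := continuous_comapSub φ
  have hΦm : Measurable Φ := hΦc.measurable
  have hΦinj : Function.Injective Φ := Subgroup.comap_injective hφ
  have hce : Topology.IsClosedEmbedding Φ := hΦc.isClosedEmbedding hΦinj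
  have hme : MeasurableEmbedding Φ := hce.measurableEmbedding
  have hcomm : ∀ d : Δ, Φ ∘ conjSub (φ d) = conjSub d ∘ Φ :=
    fun d => funext fun Λ => comap_conjSub φ d Λ
  have hmap_inv : ∀ (θ : IRSSpace Γ) (d : Δ),
      Measure.map (conjSub d) (Measure.map Φ (θ.1 : Measure (Subgroup Γ)))
        = Measure.map Φ (θ.1 : Measure (Subgroup Γ)) := by
    intro θ d
    rw [Measure.map_map (continuous_conjSub d).measurable hΦm, ← hcomm d,
      ← Measure.map_map hΦm (continuous_conjSub (φ d)).measurable, θ.2 (φ d)]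
  let Ψ : IRSSpace Γ → IRSSpace Δ := fun θ =>
    ⟨ProbabilityMeasure.map θ.1 hΦm.aemeasurable, fun d => hmap_inv θ d⟩
  have hΨ : ∀ θ : IRSSpace Γ,
      ((Ψ θ).1 : Measure (Subgroup Δ)) = Measure.map Φ (θ.1 : Measure (Subgroup Γ)) :=
    fun θ => rfl
  refine ⟨Ψ, fun θ => rfl, ?_, ?_, ?_⟩
  · -- Continuity
    exact Continuous.subtype_mk
      ((ProbabilityMeasure.continuous_map hΦc).comp continuous_subtype_val) _
  · -- Injectivity
    intro θ₁ θ₂ h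
    apply Subtype.ext
    apply Subtype.ext
    have h' : Measure.map Φ (θ₁.1 : Measure (Subgroup Γ))
        = Measure.map Φ (θ₂.1 : Measure (Subgroup Γ)) := by
      have := congrArg (fun x : IRSSpace Δ => (x.1 : Measure (Subgroup Δ))) h
      simpa only [hΨ] using this
    ext s hs
    calc (θ₁.1 : Measure (Subgroup Γ)) s
        = Measure.map Φ (θ₁.1 : Measure (Subgroup Γ)) (Φ '' s) := by
          rw [hme.map_apply, Set.preimage_image_eq s hΦinj]
      _ = Measure.map Φ (θ₂.1 : Measure (Subgroup Γ)) (Φ '' s) := by rw [h']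
      _ = (θ₂.1 : Measure (Subgroup Γ)) s := by
          rw [hme.map_apply, Set.preimage_image_eq s hΦinj]
  · -- Dynamical properties
    intro θ
    refine ⟨?_, ?_, ?_⟩
    · -- Ergodicity
      intro herg s hs hinv
      have hts : MeasurableSet (Φ ⁻¹' s) := hΦm hs
      have htinv : ∀ g : Γ, (fun Λ : Subgroup Γ => conjSub g Λ) ⁻¹' (Φ ⁻¹' s) = Φ ⁻¹' s := by
        intro g
        obtain ⟨d, rfl⟩ := hφ g
        rw [← Set.preimage_comp, hcomm d, Set.preimage_comp, hinv d]
      rcases herg (Φ ⁻¹' s) hts htinv with h0 | h0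
      · left
        rw [hΨ θ, Measure.map_apply hΦm hs]
        exact h0
      · right
        rw [hΨ θ, Measure.map_apply hΦm hs.compl, Set.preimage_compl]
        exact h0
    · -- Weak mixing
      intro hwm s hs hinv
      have hΦΦm : Measurable (Prod.map Φ Φ) := hΦm.prodMap hΦm
      have hprod : (((Ψ θ).1 : Measure (Subgroup Δ)).prod ((Ψ θ).1 : Measure (Subgroup Δ)))
          = Measure.map (Prod.map Φ Φ)
              (((θ.1 : Measure (Subgroup Γ))).prod (θ.1 : Measure (Subgroup Γ))) := by
        rw [hΨ θ]
        exact Measure.map_prod_map _ _ hΦm hΦm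
      have hts : MeasurableSet ((Prod.map Φ Φ) ⁻¹' s) := hΦΦm hs
      have htinv : ∀ g : Γ,
          (fun p : Subgroup Γ × Subgroup Γ => (conjSub g p.1, conjSub g p.2)) ⁻¹'
            ((Prod.map Φ Φ) ⁻¹' s) = (Prod.map Φ Φ) ⁻¹' s := by
        intro g
        obtain ⟨d, rfl⟩ := hφ g
        have key : (Prod.map Φ Φ) ∘
            (fun p : Subgroup Γ × Subgroup Γ => (conjSub (φ d) p.1, conjSub (φ d) p.2))
            = (fun p : Subgroup Δ × Subgroup Δ => (conjSub d p.1, conjSub d p.2)) ∘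
              (Prod.map Φ Φ) := by
          funext p
          show (Φ (conjSub (φ d) p.1), Φ (conjSub (φ d) p.2))
            = (conjSub d (Φ p.1), conjSub d (Φ p.2))
          rw [show Φ (conjSub (φ d) p.1) = conjSub d (Φ p.1) from comap_conjSub φ d p.1,
            show Φ (conjSub (φ d) p.2) = conjSub d (Φ p.2) from comap_conjSub φ d p.2]
        rw [← Set.preimage_comp, key, Set.preimage_comp, hinv d]
      rcases hwm ((Prod.map Φ Φ) ⁻¹' s) hts htinv with h0 | h0
      · left
        rw [hprod, Measure.map_apply hΦΦm hs]
        exact h0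
      · right
        rw [hprod, Measure.map_apply hΦΦm hs.compl, Set.preimage_compl]
        exact h0
    · -- Non-atomicity
      intro hna Λ'
      rw [hΨ θ, hme.map_apply]
      rcases Set.eq_empty_or_nonempty (Φ ⁻¹' {Λ'}) with he | ⟨Λ, hΛ⟩
      · simp [he]
      · have hΛ' : Φ Λ = Λ' := hΛ
        have hsub : Φ ⁻¹' {Λ'} ⊆ {Λ} := by
          intro x hx
          have hx' : Φ x = Λ' := hx
          exact hΦinj (hx'.trans hΛ'.symm)
        exact le_antisymm ((measure_mono hsub).trans (hna Λ).le) zero_le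

end IRSPaper
end
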